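/- arXiv:2108.10405 — 10 statements merged into one kernel-verified Lean document; each statement's English description precedes it below -/
import Mathlib

section
/- There do not exist positive semidefinite 4×4 matrices X and Y with P XP = X, P Y P = Y (where P is the orthogonal projection onto the symmetric subspace of C^2 ⊗ C^2) such that W = P X^Γ P + Y, where W is the matrix with rows [0,0,0,-2],[0,1,1,0],[0,1,1,0],[-2,0,0,0] and Γ denotes the partial transpose on the second tensor factor. -/
open Matrix ComplexOrder

/-- Orthogonal projection onto the symmetric subspace of ℂ^d ⊗ ℂ^d. -/
noncomputable def symProj (d : ℕ) : Matrix (Fin d × Fin d) (Fin d × Fin d) ℂ :=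
  fun p q => (((if p.1 = q.1 ∧ p.2 = q.2 then 1 else 0) +
               (if p.1 = q.2 ∧ p.2 = q.1 then 1 else 0) : ℂ)) / 2

/-- Partial transpose on the second tensor factor. -/
noncomputable def ptrans {d : ℕ} (A : Matrix (Fin d × Fin d) (Fin d × Fin d) ℂ) :
    Matrix (Fin d × Fin d) (Fin d × Fin d) ℂ :=
  fun p q => A (p.1, q.2) (q.1, p.2)

/-- The witness W with rows [0,0,0,-2],[0,1,1,0],[0,1,1,0],[-2,0,0,0], indexed
by (Fin 2 × Fin 2) with lexicographic basis ordering (0,0),(0,1),(1,0),(1,1). -/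
noncomputable def Wwit : Matrix (Fin 2 × Fin 2) (Fin 2 × Fin 2) ℂ :=
  fun p q =>
    if (p = (0, 0) ∧ q = (1, 1)) ∨ (p = (1, 1) ∧ q = (0, 0)) then -2
    else if (p = (0, 1) ∨ p = (1, 0)) ∧ (q = (0, 1) ∨ q = (1, 0)) then 1
    else 0

lemma psd_diag {A : Matrix (Fin 2 × Fin 2) (Fin 2 × Fin 2) ℂ} (hA : A.PosSemidef)
    (p : Fin 2 × Fin 2) : 0 ≤ A p p := by
  simpa [dotProduct, mulVec, Pi.single_apply, Finset.sum_ite_eq, mul_comm] using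
    hA.dotProduct_mulVec_nonneg (Pi.single p 1)

theorem stmt1 :
    ¬ ∃ X Y : Matrix (Fin 2 × Fin 2) (Fin 2 × Fin 2) ℂ,
      X.PosSemidef ∧ Y.PosSemidef ∧
      symProj 2 * X * symProj 2 = X ∧ symProj 2 * Y * symProj 2 = Y ∧
      Wwit = symProj 2 * ptrans X * symProj 2 + Y := by
  rintro ⟨X, Y, hX, hY, hPX, hPY, hW⟩
  -- entry ((0,0),(0,0))
  have h1 : (0 : ℂ) = X (0,0) (0,0) + Y (0,0) (0,0) := by
    have := congrFun (congrFun hW (0,0)) (0,0)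
    simpa [Wwit, ptrans, Matrix.add_apply, mul_apply, symProj, Fintype.sum_prod_type,
      Fin.sum_univ_two, Prod.ext_iff] using this
  -- entry ((1,1),(1,1))
  have h2 : (0 : ℂ) = X (1,1) (1,1) + Y (1,1) (1,1) := by
    have := congrFun (congrFun hW (1,1)) (1,1)
    simpa [Wwit, ptrans, Matrix.add_apply, mul_apply, symProj, Fintype.sum_prod_type,
      Fin.sum_univ_two, Prod.ext_iff] using this
  have hY00 : Y (0,0) (0,0) = 0 :=
    ((add_eq_zero_iff_of_nonneg (psd_diag hX _) (psd_diag hY _)).1 h1.symm).2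
  have hY11 : Y (1,1) (1,1) = 0 :=
    ((add_eq_zero_iff_of_nonneg (psd_diag hX _) (psd_diag hY _)).1 h2.symm).2
  -- off-diagonal of Y vanishes
  set z : ℂ := Y (0,0) (1,1) with hz
  have hYherm : Y (1,1) (0,0) = star z := by
    rw [hz]; exact (hY.1.apply _ _).symm
  have hzzero : z = 0 := by
    have hq := hY.dotProduct_mulVec_nonneg (fun p => if p = (0,0) then -z else if p = (1,1) then 1 else 0)
    simp only [dotProduct, mulVec, Fintype.sum_prod_type, Fin.sum_univ_two, Prod.ext_iff] at hq
    norm_num at hq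
    rw [show Y (1,1) (1,1) = (0:ℂ) from hY11, show Y (0,0) (0,0) = (0:ℂ) from hY00,
      show Y (1,1) (0,0) = star z from hYherm, show Y (0,0) (1,1) = z from hz.symm] at hq
    have hq' : ((2 * Complex.normSq z : ℝ) : ℂ) ≤ 0 := by
      have e : star z * z + (starRingEnd ℂ) z * (-(0 * z) + z) =
          ((2 * Complex.normSq z : ℝ) : ℂ) := by
        simp only [Complex.star_def, zero_mul, neg_zero, zero_add]
        rw [mul_comm ((starRingEnd ℂ) z) z, Complex.mul_conj]
        push_cast
        ring
      rwa [e] at hq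
    rw [Complex.le_def] at hq'
    have h1 : (2 : ℝ) * Complex.normSq z ≤ 0 := by simpa using hq'.1
    have h2 : Complex.normSq z = 0 := le_antisymm (by linarith) (Complex.normSq_nonneg z)
    exact Complex.normSq_eq_zero.1 h2
  -- entry ((0,0),(1,1))
  have h3 : (-2 : ℂ) = X (0,1) (1,0) + Y (0,0) (1,1) := by
    have := congrFun (congrFun hW (0,0)) (1,1)
    simpa [Wwit, ptrans, Matrix.add_apply, mul_apply, symProj, Fintype.sum_prod_type,
      Fin.sum_univ_two, Prod.ext_iff] using this
  have hX2 : X (0,1) (1,0) = -2 := by rw [← hz, hzzero, add_zero] at h3; exact h3.symm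
  -- from P X P = X, the two entries agree
  have hdiag : X (0,1) (0,1) = X (0,1) (1,0) := by
    have e1 := congrFun (congrFun hPX (0,1)) (0,1)
    have e2 := congrFun (congrFun hPX (0,1)) (1,0)
    rw [← e1, ← e2]
    simp [mul_apply, symProj, Fintype.sum_prod_type, Fin.sum_univ_two, Prod.ext_iff]
  have hpos := psd_diag hX (0,1)
  rw [hdiag, hX2, Complex.le_def] at hpos
  norm_num at hpos
end

section
/- If v ∈ C^d ⊗ C^d lies in the symmetric subspace and W = P (vv*)^Γ P, where P is the orthogonal projection onto the symmetric subspace and Γ is the partial transpose, then all entries of W are real, and moreover W = P (xx*)^Γ P + P (yy*)^Γ P where x = Re(v) and y = Im(v). -/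
open Matrix ComplexOrder

noncomputable def symSubspace (d : ℕ) : Submodule ℂ (Fin d × Fin d → ℂ) :=
  Submodule.span ℂ { x | ∃ v : Fin d → ℂ, x = fun p => v p.1 * v p.2 }

lemma symm_of_mem {d : ℕ} {v : Fin d × Fin d → ℂ} (hv : v ∈ symSubspace d) :
    ∀ i j, v (i, j) = v (j, i) := by
  induction hv using Submodule.span_induction with
  | mem x hx => obtain ⟨w, rfl⟩ := hx; intro i j; simp [mul_comm]
  | zero => simp
  | add a b _ _ ha hb => intro i j; simp [ha i j, hb i j]
  | smul c a _ ha => intro i j; simp [ha i j]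

lemma symProj_apply' {d : ℕ} (p q : Fin d × Fin d) :
    symProj d p q = ((if p = q then 1 else 0) + (if p = (q.2, q.1) then 1 else 0)) / 2 := by
  simp [symProj, Prod.ext_iff]

lemma mul_symProj {d : ℕ} (A : Matrix (Fin d × Fin d) (Fin d × Fin d) ℂ) (p q : Fin d × Fin d) :
    (A * symProj d) p q = (A p q + A p (q.2, q.1)) / 2 := by
  simp only [Matrix.mul_apply, symProj_apply', mul_div_assoc', mul_add, mul_ite, mul_one, mul_zero,
    ← Finset.sum_div, Finset.sum_add_distrib]
  rw [Finset.sum_ite_eq' Finset.univ q, Finset.sum_ite_eq' Finset.univ (q.2, q.1)]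
  simp

lemma symProj_mul {d : ℕ} (A : Matrix (Fin d × Fin d) (Fin d × Fin d) ℂ) (p q : Fin d × Fin d) :
    (symProj d * A) p q = (A p q + A (p.2, p.1) q) / 2 := by
  simp only [Matrix.mul_apply, symProj_apply', div_mul_eq_mul_div, add_mul, ite_mul, one_mul,
    zero_mul, ← Finset.sum_div, Finset.sum_add_distrib]
  rw [Finset.sum_ite_eq Finset.univ p]
  have : ∀ r : Fin d × Fin d, (if p = (r.2, r.1) then A r q else 0) =
      (if (p.2, p.1) = r then A r q else 0) := by
    intro r
    congr 1
    simp [Prod.ext_iff, eq_comm, and_comm]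
  rw [Finset.sum_congr rfl fun r _ => this r, Finset.sum_ite_eq Finset.univ (p.2, p.1)]
  simp

lemma sandwich {d : ℕ} (A : Matrix (Fin d × Fin d) (Fin d × Fin d) ℂ) (p q : Fin d × Fin d) :
    (symProj d * A * symProj d) p q =
      (A p q + A (p.2, p.1) q + A p (q.2, q.1) + A (p.2, p.1) (q.2, q.1)) / 4 := by
  rw [mul_symProj, symProj_mul, symProj_mul]
  ring

theorem stmt2 (d : ℕ) (v : Fin d × Fin d → ℂ) (hv : v ∈ symSubspace d)
    (W : Matrix (Fin d × Fin d) (Fin d × Fin d) ℂ)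
    (hW : W = symProj d * ptrans (vecMulVec v (star v)) * symProj d)
    (x y : Fin d × Fin d → ℂ)
    (hx : x = fun p => ((v p).re : ℂ)) (hy : y = fun p => ((v p).im : ℂ)) :
    (∀ p q, (W p q).im = 0) ∧
    W = symProj d * ptrans (vecMulVec x (star x)) * symProj d +
        symProj d * ptrans (vecMulVec y (star y)) * symProj d := by
  subst hW hx hy
  have hs : ∀ i j, v (i, j) = v (j, i) := symm_of_mem hv
  constructor
  · rintro ⟨i, j⟩ ⟨k, l⟩
    rw [sandwich]
    simp only [ptrans, vecMulVec_apply, Pi.star_apply]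
    rw [hs i k, hs l j, hs j k, hs l i]
    simp [Complex.ext_iff, Complex.div_im, Complex.add_im, Complex.mul_im]
    ring
  · ext ⟨i, j⟩ ⟨k, l⟩
    simp only [Matrix.add_apply]
    rw [sandwich, sandwich, sandwich]
    simp only [ptrans, vecMulVec_apply, Pi.star_apply]
    rw [hs i k, hs l j, hs j k, hs l i]
    simp only [Complex.star_def, map_ofNat, Complex.conj_ofReal]
    rw [← add_div]
    congr 1
    rw [show ((v (i,l)).re : ℂ) = _ from rfl]
    apply Complex.ext <;>
      simp [Complex.add_im, Complex.mul_im, Complex.add_re, Complex.mul_re] <;> ring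
end

section
/- Suppose v ∈ R^d ⊗ R^d is symmetric with spectral decomposition v = Σ_{j=1}^d α_j w_j ⊗ w_j, where α_j ∈ R and {w_j} is an orthonormal basis of R^d. Then for all 1 ≤ i ≤ j ≤ d, the vector x_{i,j} := w_i ⊗ w_j + w_j ⊗ w_i is an eigenvector of P (vv*)^Γ P with eigenvalue α_i α_j, where P is the orthogonal projection onto the symmetric subspace of C^d ⊗ C^d and Γ is the partial transpose. -/
open Matrix ComplexOrder

lemma symProj_fix {d : ℕ} (x : Fin d × Fin d → ℂ)
    (hsym : ∀ a b : Fin d, x (a, b) = x (b, a)) :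
    (symProj d).mulVec x = x := by
  funext p
  have h1 : ∀ q : Fin d × Fin d, (p.1 = q.1 ∧ p.2 = q.2) ↔ (q = p) := by
    intro q; constructor
    · rintro ⟨h1, h2⟩; exact Prod.ext h1.symm h2.symm
    · rintro rfl; exact ⟨rfl, rfl⟩
  have h2 : ∀ q : Fin d × Fin d, (p.1 = q.2 ∧ p.2 = q.1) ↔ (q = (p.2, p.1)) := by
    intro q; constructor
    · rintro ⟨h1, h2⟩; exact Prod.ext h2.symm h1.symm
    · rintro rfl; exact ⟨rfl, rfl⟩
  simp only [mulVec, dotProduct, symProj, div_mul_eq_mul_div, add_mul]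
  rw [← Finset.sum_div, Finset.sum_add_distrib]
  have e1 : ∑ q : Fin d × Fin d, (if p.1 = q.1 ∧ p.2 = q.2 then (1:ℂ) else 0) * x q = x p := by
    simp only [h1]
    simp [Finset.sum_ite_eq]
  have e2 : ∑ q : Fin d × Fin d, (if p.1 = q.2 ∧ p.2 = q.1 then (1:ℂ) else 0) * x q = x p := by
    simp only [h2]
    simp [Finset.sum_ite_eq]
    exact (hsym p.2 p.1).symm ▸ (hsym p.1 p.2).symm
  rw [e1, e2]
  ring

lemma key_sum {d : ℕ} (v : Fin d × Fin d → ℝ) (α : Fin d → ℝ) (w : Fin d → Fin d → ℝ)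
    (horth : ∀ j k : Fin d, w j ⬝ᵥ w k = if j = k then 1 else 0)
    (hdecomp : v = fun p => ∑ j : Fin d, α j * (w j p.1 * w j p.2))
    (b : Fin d) (k : Fin d) :
    ∑ a : Fin d, v (a, b) * w k a = α k * w k b := by
  subst hdecomp
  simp only
  calc ∑ a : Fin d, (∑ l : Fin d, α l * (w l a * w l b)) * w k a
      = ∑ l : Fin d, ∑ a : Fin d, α l * (w l a * w l b) * w k a := by
        rw [Finset.sum_comm]; simp [Finset.sum_mul]
    _ = ∑ l : Fin d, α l * w l b * (w l ⬝ᵥ w k) := by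
        apply Finset.sum_congr rfl; intro l _
        simp only [dotProduct, Finset.mul_sum]; apply Finset.sum_congr rfl; intro a _; ring
    _ = α k * w k b := by
        simp only [horth]
        rw [Finset.sum_eq_single k] <;> simp +contextual [Prod.ext_iff]

theorem stmt3 (d : ℕ) (v : Fin d × Fin d → ℝ) (α : Fin d → ℝ) (w : Fin d → Fin d → ℝ)
    (horth : ∀ j k : Fin d, w j ⬝ᵥ w k = if j = k then 1 else 0)
    (hdecomp : v = fun p => ∑ j : Fin d, α j * (w j p.1 * w j p.2))
    (vc : Fin d × Fin d → ℂ) (hvc : vc = fun p => ((v p : ℝ) : ℂ))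
    (i j : Fin d) (hij : i ≤ j)
    (x : Fin d × Fin d → ℂ)
    (hx : x = fun p => ((w i p.1 * w j p.2 + w j p.1 * w i p.2 : ℝ) : ℂ)) :
    (symProj d * ptrans (vecMulVec vc (star vc)) * symProj d).mulVec x
      = ((α i * α j : ℝ) : ℂ) • x := by
  have hvsym : ∀ a b : Fin d, v (a, b) = v (b, a) := by
    intro a b; rw [hdecomp]; simp only; apply Finset.sum_congr rfl; intro l _; ring
  have hxsym : ∀ a b : Fin d, x (a, b) = x (b, a) := by
    intro a b; rw [hx]; push_cast; ring
  rw [← Matrix.mulVec_mulVec, ← Matrix.mulVec_mulVec, symProj_fix x hxsym]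
  have hmid : (ptrans (vecMulVec vc (star vc))).mulVec x = ((α i * α j : ℝ) : ℂ) • x := by
    funext p
    simp only [mulVec, dotProduct, ptrans, vecMulVec_apply, Pi.star_apply, hvc, hx,
      Complex.star_def, Complex.conj_ofReal, Pi.smul_apply, smul_eq_mul]
    push_cast
    have key := key_sum v α w horth hdecomp
    have H : ∑ q : Fin d × Fin d,
        v (p.1, q.2) * v (q.1, p.2) * (w i q.1 * w j q.2 + w j q.1 * w i q.2)
        = α i * α j * (w i p.1 * w j p.2 + w j p.1 * w i p.2) := by
      rw [Fintype.sum_prod_type]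
      calc ∑ a : Fin d, ∑ b : Fin d,
            v (p.1, b) * v (a, p.2) * (w i a * w j b + w j a * w i b)
          = ∑ a : Fin d, (v (a, p.2) * w i a * ∑ b, v (p.1, b) * w j b
              + v (a, p.2) * w j a * ∑ b, v (p.1, b) * w i b) := by
            apply Finset.sum_congr rfl; intro a _
            simp only [Finset.mul_sum, ← Finset.sum_add_distrib]
            apply Finset.sum_congr rfl; intro b _; ring
        _ = (∑ a, v (a, p.2) * w i a) * (∑ b, v (p.1, b) * w j b)
              + (∑ a, v (a, p.2) * w j a) * (∑ b, v (p.1, b) * w i b) := by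
            rw [Finset.sum_add_distrib, ← Finset.sum_mul, ← Finset.sum_mul]
        _ = α i * α j * (w i p.1 * w j p.2 + w j p.1 * w i p.2) := by
            have hb : ∀ k, (∑ b, v (p.1, b) * w k b) = α k * w k p.1 := by
              intro k
              rw [show (∑ b, v (p.1, b) * w k b) = ∑ b, v (b, p.1) * w k b from ?_, key p.1 k]
              apply Finset.sum_congr rfl; intro b _; rw [hvsym]
            rw [key p.2 i, key p.2 j, hb i, hb j]; ring
    have H' := congrArg (fun r : ℝ => (r : ℂ)) H
    push_cast at H'
    linear_combination H'
  rw [hmid, Matrix.mulVec_smul, symProj_fix x hxsym]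
end

section
/- If v ∈ R^d ⊗ R^d lies in the symmetric subspace, then the matrix P (vv*)^Γ P has at most ⌊d²/4⌋ negative eigenvalues, where P is the orthogonal projection onto the symmetric subspace of C^d ⊗ C^d and Γ is the partial transpose. -/
open Matrix ComplexOrder

open Kronecker

noncomputable def swapM (d : ℕ) : Matrix (Fin d × Fin d) (Fin d × Fin d) ℂ :=
  fun p q => if q = (p.2, p.1) then 1 else 0


private lemma dotProduct_sum' {n ι : Type*} [Fintype n] (x : n → ℂ) (s : Finset ι)
    (f : ι → n → ℂ) : x ⬝ᵥ (∑ i ∈ s, f i) = ∑ i ∈ s, x ⬝ᵥ f i := by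
  simp only [dotProduct, Finset.sum_apply, Finset.mul_sum]
  exact Finset.sum_comm

private lemma sum_dotProduct' {n ι : Type*} [Fintype n] (x : n → ℂ) (s : Finset ι)
    (f : ι → n → ℂ) : (∑ i ∈ s, f i) ⬝ᵥ x = ∑ i ∈ s, f i ⬝ᵥ x := by
  simp only [dotProduct, Finset.sum_apply, Finset.sum_mul]
  exact Finset.sum_comm

lemma negEig_le_rank {n : Type*} [Fintype n] [DecidableEq n]
    {A B C : Matrix n n ℂ} (hA : A.IsHermitian) (hB : B.PosSemidef)
    (hABC : A = B - C) :
    (Finset.univ.filter fun i => hA.eigenvalues i < 0).card ≤ C.rank := by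
  by_contra hlt
  push_neg at hlt
  set neg : Finset n := Finset.univ.filter fun i => hA.eigenvalues i < 0 with hneg
  set u : n → (n → ℂ) := fun i => ⇑(hA.eigenvectorBasis i) with hu
  have horth : ∀ i j, star (u i) ⬝ᵥ u j = if i = j then 1 else 0 := by
    intro i j
    have h1 : (star (hA.eigenvectorUnitary : Matrix n n ℂ)) *
        (hA.eigenvectorUnitary : Matrix n n ℂ) = 1 := Unitary.coe_star_mul_self _
    have := congrFun (congrFun h1 i) j
    simpa [Matrix.mul_apply, Matrix.one_apply, dotProduct, Matrix.conjTranspose_apply,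
      Matrix.star_apply, mul_comm] using this
  have heig : ∀ i, A *ᵥ u i = ((hA.eigenvalues i : ℝ) : ℂ) • u i := by
    intro i
    rw [hu]
    rw [hA.mulVec_eigenvectorBasis i]
    ext j
    simp [Complex.real_smul]
  have hlin : LinearIndependent ℂ (fun i : neg => u i.val) := by
    rw [Fintype.linearIndependent_iff]
    intro g hg j
    have h2 := congrArg (fun y => star (u j.val) ⬝ᵥ y) hg
    simp only [dotProduct_sum', dotProduct_smul, horth, dotProduct_zero, smul_eq_mul,
      mul_ite, mul_one, mul_zero, Subtype.coe_inj] at h2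
    simpa [Finset.sum_ite_eq] using h2
  set V : Submodule ℂ (n → ℂ) := Submodule.span ℂ (Set.range fun i : neg => u i.val) with hV
  have hVrank : Module.finrank ℂ V = neg.card := by
    rw [finrank_span_eq_card hlin, Fintype.card_coe]
  set K : Submodule ℂ (n → ℂ) := LinearMap.ker C.mulVecLin with hK
  have hKrank : Module.finrank ℂ K + C.rank = Fintype.card n := by
    have h3 := LinearMap.finrank_range_add_finrank_ker C.mulVecLin
    rw [Module.finrank_fintype_fun_eq_card] at h3
    rw [hK]
    unfold Matrix.rank
    omega
  have hbot : V ⊓ K ≠ ⊥ := by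
    intro hb
    have h2 := Submodule.finrank_sup_add_finrank_inf_eq V K
    rw [hb, finrank_bot, add_zero] at h2
    have h3 : Module.finrank ℂ (V ⊔ K : Submodule ℂ (n → ℂ)) ≤ Fintype.card n := by
      simpa [Module.finrank_fintype_fun_eq_card] using
        Submodule.finrank_le (V ⊔ K : Submodule ℂ (n → ℂ))
    omega
  obtain ⟨x, hxVK, hx0⟩ := Submodule.exists_mem_ne_zero_of_ne_bot hbot
  obtain ⟨hxV, hxK⟩ := Submodule.mem_inf.mp hxVK
  obtain ⟨c, hc⟩ := (Submodule.mem_span_range_iff_exists_fun ℂ).mp hxV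
  have hAx : A *ᵥ x = ∑ i : neg, (c i * ((hA.eigenvalues i : ℝ) : ℂ)) • u ↑i := by
    rw [← hc]
    have h4 := map_sum A.mulVecLin (fun i : neg => c i • u ↑i) Finset.univ
    simp only [Matrix.mulVecLin_apply] at h4
    rw [h4]
    refine Finset.sum_congr rfl fun i _ => ?_
    rw [Matrix.mulVec_smul, heig, smul_smul]
  have hsx : star x = ∑ j : neg, (starRingEnd ℂ) (c j) • star (u ↑j) := by
    rw [← hc, star_sum]
    refine Finset.sum_congr rfl fun j _ => ?_
    rw [star_smul]
    rfl
  have hs : star x ⬝ᵥ (A *ᵥ x) =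
      ((∑ i : neg, hA.eigenvalues ↑i * Complex.normSq (c i) : ℝ) : ℂ) := by
    rw [hAx, hsx, sum_dotProduct']
    push_cast
    simp only [smul_dotProduct, dotProduct_sum', dotProduct_smul, horth, smul_eq_mul,
      mul_ite, mul_one, mul_zero, Subtype.coe_inj]
    simp only [Finset.sum_ite_eq, Finset.mem_univ, if_true]
    refine Finset.sum_congr rfl fun i _ => ?_
    rw [Complex.normSq_eq_conj_mul_self]
    ring
  have hsum_neg : (∑ i : neg, hA.eigenvalues ↑i * Complex.normSq (c i)) < 0 := by
    obtain ⟨i0, hi0⟩ : ∃ i, c i ≠ 0 := by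
      by_contra h
      push_neg at h
      exact hx0 (by rw [← hc]; simp [h])
    have hmem : ∀ i : neg, hA.eigenvalues ↑i < 0 := fun i =>
      (Finset.mem_filter.mp i.2).2
    have h5 : ∑ i : neg, hA.eigenvalues ↑i * Complex.normSq (c i) <
        ∑ _i : neg, (0 : ℝ) := by
      refine Finset.sum_lt_sum (fun i _ => ?_) ⟨i0, Finset.mem_univ _, ?_⟩
      · exact mul_nonpos_of_nonpos_of_nonneg (hmem i).le (Complex.normSq_nonneg _)
      · exact mul_neg_of_neg_of_pos (hmem i0) (Complex.normSq_pos.mpr hi0)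
    simpa using h5
  have hge : (0 : ℂ) ≤ star x ⬝ᵥ (A *ᵥ x) := by
    have hCx : C *ᵥ x = 0 := by
      have := LinearMap.mem_ker.mp hxK
      rwa [Matrix.mulVecLin_apply] at this
    rw [hABC, Matrix.sub_mulVec, dotProduct_sub, hCx, dotProduct_zero, sub_zero]
    exact hB.dotProduct_mulVec_nonneg x
  rw [hs] at hge
  rw [Complex.zero_le_real] at hge
  linarith

section helper
variable {d : ℕ}

lemma swapM_apply' (p q : Fin d × Fin d) :
    swapM d p q = if p = (q.2, q.1) then 1 else 0 := by
  unfold swapM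
  congr 1
  simp only [eq_iff_iff, Prod.ext_iff]
  tauto

lemma swapM_mul (X : Matrix (Fin d × Fin d) (Fin d × Fin d) ℂ) (p q : Fin d × Fin d) :
    (swapM d * X) p q = X (p.2, p.1) q := by
  simp [Matrix.mul_apply, swapM, ite_mul, one_mul, zero_mul, Finset.sum_ite_eq]

lemma mul_swapM (X : Matrix (Fin d × Fin d) (Fin d × Fin d) ℂ) (p q : Fin d × Fin d) :
    (X * swapM d) p q = X p (q.2, q.1) := by
  simp [Matrix.mul_apply, swapM_apply', mul_ite, mul_one, mul_zero, Finset.sum_ite_eq']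

lemma and_eq_comm' {α : Type*} (a b c e : α) : (a = b ∧ c = e) = (c = e ∧ a = b) := by
  simp only [eq_iff_iff]; exact and_comm

lemma swapM_mul_symProj : swapM d * symProj d = symProj d := by
  ext p q
  rw [swapM_mul]
  unfold symProj
  simp only
  rw [add_comm]
  simp only [and_eq_comm' p.2 q.1, and_eq_comm' p.2 q.2]

lemma symProj_mul_swapM : symProj d * swapM d = symProj d := by
  ext p q
  rw [mul_swapM]
  unfold symProj
  simp only
  rw [add_comm]

lemma symProj_conjTranspose : (symProj d)ᴴ = symProj d := by
  ext p q
  simp only [conjTranspose_apply, symProj]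
  rw [star_div₀, star_add, apply_ite (star : ℂ → ℂ), apply_ite (star : ℂ → ℂ)]
  simp only [star_one, star_zero, RCLike.star_def, map_ofNat]
  have hh : ∀ a b c e : Fin d, (a = b ∧ c = e) = (b = a ∧ e = c) := by
    intro a b c e
    simp only [eq_iff_iff]
    exact ⟨fun h => ⟨h.1.symm, h.2.symm⟩, fun h => ⟨h.1.symm, h.2.symm⟩⟩
  simp only [hh q.1 p.1, hh q.1 p.2]
  simp only [and_eq_comm' p.2 q.1]

lemma kron_conjTranspose (X Y : Matrix (Fin d) (Fin d) ℂ) :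
    (X ⊗ₖ Y)ᴴ = Xᴴ ⊗ₖ Yᴴ := by
  ext p q
  simp [conjTranspose_apply, kroneckerMap_apply, mul_comm]

lemma swapM_kron_swapM (X Y : Matrix (Fin d) (Fin d) ℂ) :
    swapM d * (X ⊗ₖ Y) * swapM d = Y ⊗ₖ X := by
  ext p q
  rw [mul_swapM, swapM_mul]
  simp [kroneckerMap_apply, mul_comm]

end helper

section main
variable {d : ℕ}

lemma ptrans_eq (vc : Fin d × Fin d → ℂ)
    (hsymm : ∀ p : Fin d × Fin d, vc (p.2, p.1) = vc p)
    (hreal : ∀ p, (starRingEnd ℂ) (vc p) = vc p) :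
    ptrans (vecMulVec vc (star vc)) =
      ((Matrix.of fun i j => vc (i, j)) ⊗ₖ (Matrix.of fun i j => vc (i, j))) * swapM d := by
  ext p q
  rw [mul_swapM]
  simp only [ptrans, vecMulVec_apply, kroneckerMap_apply, of_apply, Pi.star_apply]
  rw [RCLike.star_def, hreal]
  congr 1
  exact hsymm (p.2, q.1)

end main

theorem stmt5 (d : ℕ) (v : Fin d × Fin d → ℝ)
    (vc : Fin d × Fin d → ℂ) (hvc : vc = fun p => ((v p : ℝ) : ℂ))
    (hv : vc ∈ symSubspace d)
    (W : Matrix (Fin d × Fin d) (Fin d × Fin d) ℂ)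
    (hW : W = symProj d * ptrans (vecMulVec vc (star vc)) * symProj d)
    (hHerm : W.IsHermitian) :
    (Finset.univ.filter (fun i => hHerm.eigenvalues i < 0)).card ≤ d ^ 2 / 4 := by
  classical
  have hsymm : ∀ p : Fin d × Fin d, vc (p.2, p.1) = vc p := by
    intro p
    refine Submodule.span_induction (p := fun x _ => x (p.2, p.1) = x p) ?_ ?_ ?_ ?_ hv
    · rintro x ⟨w, rfl⟩; simp [mul_comm]
    · simp
    · intro x y _ _ hx hy; simp [hx, hy]
    · intro a x _ hx; simp [hx]
  have hreal : ∀ p, (starRingEnd ℂ) (vc p) = vc p := by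
    intro p; rw [hvc]; simp
  set Mc : Matrix (Fin d) (Fin d) ℂ := Matrix.of (fun i j => vc (i, j)) with hMc
  have hMH : Mc.IsHermitian := by
    ext i j
    simp only [conjTranspose_apply, hMc, of_apply, RCLike.star_def]
    rw [hreal (j, i)]
    exact hsymm (i, j)
  set α : Fin d → ℝ := hMH.eigenvalues with hα
  set Uc : Matrix (Fin d) (Fin d) ℂ := (hMH.eigenvectorUnitary : Matrix (Fin d) (Fin d) ℂ)
    with hUc
  have hspec : Mc = Uc * diagonal (RCLike.ofReal ∘ α) * Ucᴴ := hMH.spectral_theorem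
  set dp : Fin d → ℂ := fun i => if 0 < α i then ((α i : ℝ) : ℂ) else 0 with hdp
  set dm : Fin d → ℂ := fun i => if α i < 0 then ((-α i : ℝ) : ℂ) else 0 with hdm
  have hdd : diagonal (RCLike.ofReal ∘ α) = diagonal dp - diagonal dm := by
    ext i j
    by_cases hij : i = j
    · subst hij
      simp only [diagonal_apply_eq, Matrix.sub_apply, Function.comp_apply]
      rcases lt_trichotomy (α i) 0 with h | h | h
      · simp [hdp, hdm, h, asymm h]
      · simp [hdp, hdm, h]
      · simp [hdp, hdm, h, asymm h]
    · simp [Matrix.sub_apply, diagonal_apply_ne _ hij]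
  set Bp : Matrix (Fin d) (Fin d) ℂ := Uc * diagonal dp * Ucᴴ with hBp
  set Bm : Matrix (Fin d) (Fin d) ℂ := Uc * diagonal dm * Ucᴴ with hBm
  have hMsplit : Mc = Bp - Bm := by
    rw [hspec, hdd, hBp, hBm]
    noncomm_ring
  -- W = P (Mc ⊗ Mc) P
  have hW2 : W = symProj d * (Mc ⊗ₖ Mc) * symProj d := by
    rw [hW, ptrans_eq vc hsymm hreal, ← hMc]
    rw [show symProj d * (Mc ⊗ₖ Mc * swapM d) * symProj d
        = symProj d * (Mc ⊗ₖ Mc) * (swapM d * symProj d) by noncomm_ring]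
    rw [swapM_mul_symProj]
  have hswap : symProj d * (Bm ⊗ₖ Bp) * symProj d = symProj d * (Bp ⊗ₖ Bm) * symProj d := by
    have h1 : symProj d * (Bm ⊗ₖ Bp) * symProj d
        = (symProj d * swapM d) * (Bm ⊗ₖ Bp) * (swapM d * symProj d) := by
      rw [symProj_mul_swapM, swapM_mul_symProj]
    rw [h1, show (symProj d * swapM d) * (Bm ⊗ₖ Bp) * (swapM d * symProj d)
        = symProj d * (swapM d * (Bm ⊗ₖ Bp) * swapM d) * symProj d by noncomm_ring,
      swapM_kron_swapM]
  set Bmat : Matrix (Fin d × Fin d) (Fin d × Fin d) ℂ :=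
    symProj d * (Bp ⊗ₖ Bp) * symProj d + symProj d * (Bm ⊗ₖ Bm) * symProj d with hBmat
  set Cmat : Matrix (Fin d × Fin d) (Fin d × Fin d) ℂ :=
    symProj d * ((Bp + Bp) ⊗ₖ Bm) * symProj d with hCmat
  have hWBC : W = Bmat - Cmat := by
    have hk : (Bp - Bm) ⊗ₖ (Bp - Bm)
        = Bp ⊗ₖ Bp + Bm ⊗ₖ Bm - (Bp ⊗ₖ Bm + Bm ⊗ₖ Bp) := by
      ext p q
      simp only [kroneckerMap_apply, Matrix.sub_apply, Matrix.add_apply]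
      ring
    have hC' : Cmat = symProj d * (Bp ⊗ₖ Bm) * symProj d
        + symProj d * (Bm ⊗ₖ Bp) * symProj d := by
      rw [hCmat, add_kronecker, hswap]
      noncomm_ring
    rw [hW2, hMsplit, hk, hC', hBmat]
    noncomm_ring
  -- positive semidefiniteness of Bmat
  have hdp_nonneg : ∀ i, (0 : ℂ) ≤ dp i := by
    intro i
    rw [hdp]
    dsimp only
    split_ifs with h
    · exact Complex.zero_le_real.mpr h.le
    · exact le_refl 0
  have hdm_nonneg : ∀ i, (0 : ℂ) ≤ dm i := by
    intro i
    rw [hdm]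
    dsimp only
    split_ifs with h
    · exact Complex.zero_le_real.mpr (by linarith)
    · exact le_refl 0
  have hkronpsd : ∀ a b : Fin d → ℂ, (∀ i, (0:ℂ) ≤ a i) → (∀ i, (0:ℂ) ≤ b i) →
      PosSemidef (symProj d * ((Uc * diagonal a * Ucᴴ) ⊗ₖ (Uc * diagonal b * Ucᴴ)) * symProj d) := by
    intro a b ha hb
    have h1 : (Uc * diagonal a * Ucᴴ) ⊗ₖ (Uc * diagonal b * Ucᴴ)
        = (Uc ⊗ₖ Uc) * diagonal (fun p : Fin d × Fin d => a p.1 * b p.2) * (Uc ⊗ₖ Uc)ᴴ := by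
      rw [kron_conjTranspose, ← diagonal_kronecker_diagonal, ← mul_kronecker_mul,
        ← mul_kronecker_mul]
    have h2 : PosSemidef (diagonal (fun p : Fin d × Fin d => a p.1 * b p.2)) :=
      posSemidef_diagonal_iff.mpr fun p => mul_nonneg (ha p.1) (hb p.2)
    have h3 : PosSemidef ((Uc ⊗ₖ Uc) * diagonal (fun p : Fin d × Fin d => a p.1 * b p.2)
        * (Uc ⊗ₖ Uc)ᴴ) := h2.mul_mul_conjTranspose_same _
    rw [h1]
    have h4 := h3.conjTranspose_mul_mul_same (B := symProj d)
    rwa [symProj_conjTranspose] at h4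
  have hBmatPSD : Bmat.PosSemidef := by
    rw [hBmat, hBp, hBm]
    exact (hkronpsd dp dp hdp_nonneg hdp_nonneg).add (hkronpsd dm dm hdm_nonneg hdm_nonneg)
  -- counting
  have hcount := negEig_le_rank hHerm hBmatPSD hWBC
  set npos := (Finset.univ.filter fun i => 0 < α i).card with hnpos
  set nneg := (Finset.univ.filter fun i => α i < 0).card with hnneg
  set w : Fin d × Fin d → ℂ := fun p => (dp + dp) p.1 * dm p.2 with hw
  have hCrank : Cmat.rank ≤ npos * nneg := by
    have hBsum : Bp + Bp = Uc * diagonal (dp + dp) * Ucᴴ := by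
      have hdsum : diagonal (dp + dp) = diagonal dp + diagonal dp := by
        rw [diagonal_add]
        rfl
      rw [hBp, hdsum]
      noncomm_ring
    have h1 : (Bp + Bp) ⊗ₖ Bm = (Uc ⊗ₖ Uc) * diagonal w * (Uc ⊗ₖ Uc)ᴴ := by
      rw [hBsum, hBm, kron_conjTranspose, ← diagonal_kronecker_diagonal,
        ← mul_kronecker_mul, ← mul_kronecker_mul]
    have h2 : Cmat.rank ≤ (diagonal w).rank :=
      calc Cmat.rank ≤ (symProj d * ((Bp + Bp) ⊗ₖ Bm)).rank := rank_mul_le_left _ _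
        _ ≤ ((Bp + Bp) ⊗ₖ Bm).rank := rank_mul_le_right _ _
        _ = ((Uc ⊗ₖ Uc) * (diagonal w * (Uc ⊗ₖ Uc)ᴴ)).rank := by rw [h1, mul_assoc]
        _ ≤ (diagonal w * (Uc ⊗ₖ Uc)ᴴ).rank := rank_mul_le_right _ _
        _ ≤ (diagonal w).rank := rank_mul_le_left _ _
    have h3 : (diagonal w).rank = Fintype.card {p // w p ≠ 0} := rank_diagonal w
    have h4 : Fintype.card {p // w p ≠ 0} ≤ npos * nneg := by
      rw [Fintype.card_subtype]
      have hsub : (Finset.univ.filter fun p : Fin d × Fin d => w p ≠ 0) ⊆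
          (Finset.univ.filter fun i => 0 < α i) ×ˢ (Finset.univ.filter fun i => α i < 0) := by
        intro p hp
        rw [Finset.mem_filter] at hp
        rw [Finset.mem_product, Finset.mem_filter, Finset.mem_filter]
        refine ⟨⟨Finset.mem_univ _, ?_⟩, ⟨Finset.mem_univ _, ?_⟩⟩
        · by_contra h
          apply hp.2
          rw [hw]
          dsimp only [Pi.add_apply]
          rw [hdp]
          dsimp only
          rw [if_neg h]
          ring
        · by_contra h
          apply hp.2
          rw [hw]
          dsimp only [Pi.add_apply]
          rw [hdm]
          dsimp only
          rw [if_neg h]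
          ring
      calc (Finset.univ.filter fun p : Fin d × Fin d => w p ≠ 0).card
          ≤ ((Finset.univ.filter fun i => 0 < α i) ×ˢ
              (Finset.univ.filter fun i => α i < 0)).card := Finset.card_le_card hsub
        _ = npos * nneg := by rw [Finset.card_product]
    omega
  have hnd : npos + nneg ≤ d := by
    have hdisj : Disjoint (Finset.univ.filter fun i => 0 < α i)
        (Finset.univ.filter fun i => α i < 0) := by
      rw [Finset.disjoint_left]
      intro i h1 h2
      rw [Finset.mem_filter] at h1 h2
      exact absurd h2.2 (asymm h1.2)
    calc npos + nneg
        = ((Finset.univ.filter fun i => 0 < α i) ∪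
            (Finset.univ.filter fun i => α i < 0)).card :=
          (Finset.card_union_of_disjoint hdisj).symm
      _ ≤ (Finset.univ : Finset (Fin d)).card := Finset.card_le_card (Finset.subset_univ _)
      _ = d := by simp
  have hfinal : npos * nneg ≤ d ^ 2 / 4 := by
    rw [Nat.le_div_iff_mul_le (by norm_num : 0 < 4)]
    have h1 : (npos : ℤ) + nneg ≤ d := by exact_mod_cast hnd
    have h2 : ((npos : ℤ) * nneg) * 4 ≤ (d : ℤ) ^ 2 := by
      nlinarith [sq_nonneg ((npos : ℤ) - nneg)]
    exact_mod_cast h2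
  exact hcount.trans (hCrank.trans hfinal)
end

section
/- Let λ_1 ≥ λ_2 ≥ λ_3 ≥ 0 sum to 1 and satisfy λ_1 ≤ 2√(λ_2 λ_3). Then every Hermitian positive semidefinite 3×3 matrix ρ (representing a state on the symmetric subspace of C^2 ⊗ C^2) with eigenvalues λ_1, λ_2, λ_3 satisfies ν_1 − ν_2 − ν_3 ≤ λ_1 − 2√(λ_2 λ_3) ≤ 0, where ν_1 ≥ ν_2 ≥ ν_3 are the singular values of √D U^T S U √D, ρ = U D U* is a spectral decomposition, and S is the 3×3 matrix with rows [0,0,1],[0,−1,0],[1,0,0]. -/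
open Matrix ComplexOrder

private lemma eig_le_aux {n : Type*} [Fintype n] [DecidableEq n] {A : Matrix n n ℂ}
    (hA : A.IsHermitian) {c : ℝ} (h : ((c : ℂ) • (1 : Matrix n n ℂ) - A).PosSemidef) (i : n) :
    hA.eigenvalues i ≤ c := by
  have h0 := h.re_dotProduct_nonneg ⇑(hA.eigenvectorBasis i)
  have hv : star ⇑(hA.eigenvectorBasis i) ⬝ᵥ ⇑(hA.eigenvectorBasis i) = 1 := by
    rw [dotProduct_comm, ← EuclideanSpace.inner_eq_star_dotProduct]
    simp [inner_self_eq_norm_sq_to_K, hA.eigenvectorBasis.orthonormal.1 i]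
  rw [sub_mulVec, smul_mulVec, one_mulVec, hA.mulVec_eigenvectorBasis,
    dotProduct_sub, dotProduct_smul, dotProduct_smul, hv] at h0
  simp at h0
  linarith

theorem stmt8 (lam : Fin 3 → ℝ)
    (hsort : ∀ i j : Fin 3, i ≤ j → lam j ≤ lam i) (hnonneg : 0 ≤ lam 2)
    (hsum : lam 0 + lam 1 + lam 2 = 1)
    (habs : lam 0 ≤ 2 * Real.sqrt (lam 1 * lam 2))
    (U : Matrix (Fin 3) (Fin 3) ℂ) (hU : U ∈ Matrix.unitaryGroup (Fin 3) ℂ)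
    (S : Matrix (Fin 3) (Fin 3) ℂ) (hS : S = !![0, 0, 1; 0, -1, 0; 1, 0, 0])
    (sqrtD : Matrix (Fin 3) (Fin 3) ℂ)
    (hsqrtD : sqrtD = Matrix.diagonal (fun i => ((Real.sqrt (lam i) : ℝ) : ℂ)))
    (M : Matrix (Fin 3) (Fin 3) ℂ) (hM : M = sqrtD * Uᵀ * S * U * sqrtD)
    (ν : Fin 3 → ℝ)
    (hν : ∃ σ : Equiv.Perm (Fin 3), ∀ i,
      ν i = Real.sqrt ((Matrix.posSemidef_conjTranspose_mul_self M).1.eigenvalues (σ i)))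
    (hνsort : ∀ i j : Fin 3, i ≤ j → ν j ≤ ν i) :
    ν 0 - ν 1 - ν 2 ≤ lam 0 - 2 * Real.sqrt (lam 1 * lam 2) ∧
    lam 0 - 2 * Real.sqrt (lam 1 * lam 2) ≤ 0 := by
  have hlam : ∀ i : Fin 3, 0 ≤ lam i := fun i => le_trans hnonneg (hsort i 2 (by omega))
  have hPSDkey :
      (((lam 0 ^ 2 : ℝ) : ℂ) • (1 : Matrix (Fin 3) (Fin 3) ℂ) - Mᴴ * M).PosSemidef := by
    set c : ℂ := (lam 0 : ℂ) with hc
    set D : Matrix (Fin 3) (Fin 3) ℂ := Matrix.diagonal (fun i => (lam i : ℂ)) with hD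
    set V : Matrix (Fin 3) (Fin 3) ℂ := Uᵀ * S * U with hV
    have hsqH : sqrtDᴴ = sqrtD := by
      rw [hsqrtD]
      ext i j
      rcases eq_or_ne i j with h | h <;>
        simp [h, conjTranspose_apply, diagonal_apply, Complex.conj_ofReal, eq_comm]
    have hsq' : sqrtD * sqrtD = D := by
      rw [hsqrtD, diagonal_mul_diagonal, hD]
      have : (fun i => ((Real.sqrt (lam i) : ℝ) : ℂ) * ((Real.sqrt (lam i) : ℝ) : ℂ))
          = fun i : Fin 3 => ((lam i : ℝ) : ℂ) := by
        funext i
        rw [← Complex.ofReal_mul, Real.mul_self_sqrt (hlam i)]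
      rw [this]
    have hsq : ∀ B : Matrix (Fin 3) (Fin 3) ℂ, sqrtD * (sqrtD * B) = D * B := by
      intro B; rw [← mul_assoc, hsq']
    have hSS : S * S = 1 := by
      rw [hS, one_fin_three, Matrix.mul_fin_three]
      norm_num
    have hSH : Sᴴ = S := by
      rw [hS]
      ext i j
      fin_cases i <;> fin_cases j <;>
        norm_num [conjTranspose_apply, Matrix.vecHead, Matrix.vecTail]
    have hUU : U * Uᴴ = 1 := by
      simpa [star_eq_conjTranspose] using (Matrix.mem_unitaryGroup_iff).mp hU
    have hUU' : Uᴴ * U = 1 := by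
      simpa [star_eq_conjTranspose] using (Matrix.mem_unitaryGroup_iff').mp hU
    have hTH : (Uᵀ)ᴴ = (Uᴴ)ᵀ := by
      ext i j; simp [conjTranspose_apply, transpose_apply]
    have hTT : (Uᵀ)ᴴ * Uᵀ = 1 := by
      rw [hTH, ← transpose_mul, hUU, transpose_one]
    have hVV : ∀ B : Matrix (Fin 3) (Fin 3) ℂ, Vᴴ * (V * B) = B := by
      intro B
      have : Vᴴ * V = 1 := by
        calc Vᴴ * V = Uᴴ * (Sᴴ * ((Uᵀ)ᴴ * Uᵀ) * S * U) := by
              simp [hV, conjTranspose_mul, mul_assoc]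
          _ = 1 := by rw [hTT, hSH, mul_one, ← mul_assoc, hSS]; simpa [mul_assoc] using hUU'
      rw [← mul_assoc, this, one_mul]
    have hM' : M = sqrtD * (V * sqrtD) := by rw [hM, hV]; noncomm_ring
    set E : Matrix (Fin 3) (Fin 3) ℂ :=
      Matrix.diagonal (fun i => ((lam 0 - lam i : ℝ) : ℂ)) with hE
    have hEeq : c • (1 : Matrix (Fin 3) (Fin 3) ℂ) - D = E := by
      rw [hD, hE]
      ext i j
      rcases eq_or_ne i j with h | h <;>
        simp [h, diagonal_apply, Matrix.one_apply, eq_comm, hc]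
    have hX : Mᴴ * M = sqrtD * (Vᴴ * (D * (V * sqrtD))) := by
      rw [hM']
      rw [conjTranspose_mul, conjTranspose_mul, hsqH]
      calc (sqrtD * Vᴴ) * sqrtD * (sqrtD * (V * sqrtD))
          = sqrtD * (Vᴴ * (sqrtD * (sqrtD * (V * sqrtD)))) := by noncomm_ring
        _ = _ := by rw [hsq]
    have hB : (V * sqrtD)ᴴ * E * (V * sqrtD)
        = c • D - sqrtD * (Vᴴ * (D * (V * sqrtD))) := by
      rw [← hEeq, conjTranspose_mul, hsqH]
      rw [Matrix.mul_sub, Matrix.sub_mul, Matrix.mul_smul, Matrix.mul_one]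
      congr 1
      · rw [Matrix.smul_mul]
        congr 1
        calc sqrtD * Vᴴ * (V * sqrtD) = sqrtD * (Vᴴ * (V * sqrtD)) := by rw [mul_assoc]
          _ = sqrtD * sqrtD := by rw [hVV]
          _ = D := hsq'
      · noncomm_ring
    have key : ((lam 0 ^ 2 : ℝ) : ℂ) • (1 : Matrix (Fin 3) (Fin 3) ℂ) - Mᴴ * M
        = (V * sqrtD)ᴴ * E * (V * sqrtD) + c • E := by
      rw [hB, ← hEeq, hX]
      push_cast
      rw [hc]
      module
    rw [key]
    have hEpsd : E.PosSemidef := by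
      rw [hE]
      refine posSemidef_diagonal_iff.mpr fun i => ?_
      rw [← Complex.ofReal_zero, Complex.real_le_real]
      have := hsort 0 i (by omega)
      linarith
    refine PosSemidef.add (hEpsd.conjTranspose_mul_mul_same _) ?_
    have : c • E = Matrix.diagonal (fun i => ((lam 0 * (lam 0 - lam i) : ℝ) : ℂ)) := by
      have harg : ((lam 0 : ℂ) • fun i : Fin 3 => ((lam 0 - lam i : ℝ) : ℂ))
          = fun i : Fin 3 => ((lam 0 * (lam 0 - lam i) : ℝ) : ℂ) := by
        funext i
        show (lam 0 : ℂ) * _ = _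
        push_cast
        ring
      rw [hE, hc, ← diagonal_smul, harg]
    rw [this]
    refine posSemidef_diagonal_iff.mpr fun i => ?_
    rw [← Complex.ofReal_zero, Complex.real_le_real]
    have := hsort 0 i (by omega)
    nlinarith [hlam 0]
  have hdet : (Mᴴ * M).det = (((lam 0 * lam 1 * lam 2) ^ 2 : ℝ) : ℂ) := by
    have hdS : S.det = 1 := by
      rw [hS, Matrix.det_fin_three]
      norm_num
      exact mul_one (1 : ℂ)
    have hdsq : sqrtD.det = ((Real.sqrt (lam 0) * Real.sqrt (lam 1) * Real.sqrt (lam 2) : ℝ) : ℂ) := by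
      rw [hsqrtD, det_diagonal, Fin.prod_univ_three]
      push_cast
      ring
    have hdU : star U.det * U.det = 1 := by
      have h1 : (star U * U).det = 1 := by
        rw [(Matrix.mem_unitaryGroup_iff').mp hU, det_one]
      rwa [det_mul, star_eq_conjTranspose, det_conjTranspose] at h1
    have hdM : M.det = ((Real.sqrt (lam 0) * Real.sqrt (lam 1) * Real.sqrt (lam 2) : ℝ) : ℂ) ^ 2
        * U.det ^ 2 := by
      rw [hM, det_mul, det_mul, det_mul, det_mul, hdsq, hdS, det_transpose]
      ring
    rw [det_mul, det_conjTranspose, hdM]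
    rw [star_mul', star_pow, star_pow]
    have hstar : star (((Real.sqrt (lam 0) * Real.sqrt (lam 1) * Real.sqrt (lam 2) : ℝ) : ℂ))
        = ((Real.sqrt (lam 0) * Real.sqrt (lam 1) * Real.sqrt (lam 2) : ℝ) : ℂ) := by
      rw [Complex.star_def, Complex.conj_ofReal]
    rw [hstar]
    have : (star U.det) ^ 2 * (U.det) ^ 2 = 1 := by
      rw [← mul_pow, hdU, one_pow]
    calc ((Real.sqrt (lam 0) * Real.sqrt (lam 1) * Real.sqrt (lam 2) : ℝ) : ℂ) ^ 2 * (star U.det) ^ 2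
          * (((Real.sqrt (lam 0) * Real.sqrt (lam 1) * Real.sqrt (lam 2) : ℝ) : ℂ) ^ 2 * U.det ^ 2)
        = (((Real.sqrt (lam 0) * Real.sqrt (lam 1) * Real.sqrt (lam 2) : ℝ) : ℂ) ^ 2) ^ 2
          * ((star U.det) ^ 2 * U.det ^ 2) := by ring
      _ = (((lam 0 * lam 1 * lam 2) ^ 2 : ℝ) : ℂ) := by
          rw [this, mul_one, ← Complex.ofReal_pow, ← Complex.ofReal_pow]
          congr 1
          calc ((Real.sqrt (lam 0) * Real.sqrt (lam 1) * Real.sqrt (lam 2)) ^ 2) ^ 2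
              = (Real.sqrt (lam 0) ^ 2 * Real.sqrt (lam 1) ^ 2 * Real.sqrt (lam 2) ^ 2) ^ 2 := by
                ring
            _ = (lam 0 * lam 1 * lam 2) ^ 2 := by
                rw [Real.sq_sqrt (hlam 0), Real.sq_sqrt (hlam 1), Real.sq_sqrt (hlam 2)]
  set hP := Matrix.posSemidef_conjTranspose_mul_self M with hPdef
  set e : Fin 3 → ℝ := hP.1.eigenvalues with he
  have he_nonneg : ∀ i, 0 ≤ e i := fun i => hP.eigenvalues_nonneg i
  have he_le : ∀ i, e i ≤ lam 0 ^ 2 := fun i => eig_le_aux hP.1 hPSDkey i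
  have he_prod : e 0 * e 1 * e 2 = (lam 0 * lam 1 * lam 2) ^ 2 := by
    have h1 : (Mᴴ * M).det = ∏ i, ((e i : ℝ) : ℂ) := hP.1.det_eq_prod_eigenvalues
    rw [hdet, Fin.prod_univ_three] at h1
    have h2 : (((lam 0 * lam 1 * lam 2) ^ 2 : ℝ) : ℂ) = (((e 0 * e 1 * e 2 : ℝ)) : ℂ) := by
      rw [h1]; push_cast; ring
    exact (Complex.ofReal_inj.mp h2).symm
  obtain ⟨σ, hσ⟩ := hν
  have hν_nonneg : ∀ i, 0 ≤ ν i := fun i => (hσ i) ▸ Real.sqrt_nonneg _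
  have hν_le : ∀ i, ν i ≤ lam 0 := by
    intro i
    rw [hσ i]
    calc Real.sqrt (hP.1.eigenvalues (σ i)) ≤ Real.sqrt (lam 0 ^ 2) :=
          Real.sqrt_le_sqrt (he_le (σ i))
      _ = lam 0 := Real.sqrt_sq (hlam 0)
  have hν_prod : ν 0 * ν 1 * ν 2 = lam 0 * lam 1 * lam 2 := by
    have hperm : e (σ 0) * e (σ 1) * e (σ 2) = e 0 * e 1 * e 2 := by
      calc e (σ 0) * e (σ 1) * e (σ 2) = ∏ i, e (σ i) := (Fin.prod_univ_three (fun i => e (σ i))).symm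
        _ = ∏ i, e i := Equiv.prod_comp σ e
        _ = e 0 * e 1 * e 2 := Fin.prod_univ_three _
    rw [hσ 0, hσ 1, hσ 2]
    rw [← Real.sqrt_mul (he_nonneg _), ← Real.sqrt_mul (mul_nonneg (he_nonneg _) (he_nonneg _))]
    rw [show hP.1.eigenvalues (σ 0) * hP.1.eigenvalues (σ 1) * hP.1.eigenvalues (σ 2)
          = e (σ 0) * e (σ 1) * e (σ 2) from rfl, hperm, he_prod]
    exact Real.sqrt_sq (mul_nonneg (mul_nonneg (hlam 0) (hlam 1)) (hlam 2))
  constructor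
  · rcases hnonneg.lt_or_eq with hl2 | hl2
    · have hl1 : 0 < lam 1 := lt_of_lt_of_le hl2 (hsort 1 2 (by omega))
      have hl0 : 0 < lam 0 := lt_of_lt_of_le hl1 (hsort 0 1 (by omega))
      have hprodpos : 0 < ν 0 * ν 1 * ν 2 := by rw [hν_prod]; positivity
      have hν2 : 0 < ν 2 := by
        rcases (hν_nonneg 2).lt_or_eq with h | h
        · exact h
        · exfalso; rw [← h, mul_zero] at hprodpos; exact lt_irrefl _ hprodpos
      have hν1 : 0 < ν 1 := lt_of_lt_of_le hν2 (hνsort 1 2 (by omega))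
      have hν0 : 0 < ν 0 := lt_of_lt_of_le hν1 (hνsort 0 1 (by omega))
      have hab : lam 1 * lam 2 ≤ ν 1 * ν 2 := by
        nlinarith [hν_prod, hν_le 0, mul_pos hl1 hl2, hν0]
      have hsq1 : Real.sqrt (lam 1 * lam 2) ≤ Real.sqrt (ν 1 * ν 2) := Real.sqrt_le_sqrt hab
      have hsq2 : 2 * Real.sqrt (ν 1 * ν 2) ≤ ν 1 + ν 2 := by
        rw [Real.sqrt_mul (le_of_lt hν1)]
        nlinarith [sq_nonneg (Real.sqrt (ν 1) - Real.sqrt (ν 2)),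
          Real.sq_sqrt (le_of_lt hν1), Real.sq_sqrt (le_of_lt hν2),
          Real.sqrt_nonneg (ν 1), Real.sqrt_nonneg (ν 2)]
      linarith [hν_le 0]
    · have hz : Real.sqrt (lam 1 * lam 2) = 0 := by
        rw [← hl2, mul_zero, Real.sqrt_zero]
      rw [hz]
      have := hν_le 0
      have := hν_nonneg 1
      have := hν_nonneg 2
      linarith
  · linarith
end

section
/- For any 3×3 complex matrices A and B, the singular values (ordered σ_1 ≥ σ_2 ≥ σ_3) satisfy σ_2(AB) + σ_3(AB) ≥ σ_2(A)σ_3(B) + σ_3(A)σ_2(B). -/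
open Matrix ComplexOrder

/-- `IsSingularValues M s` says that `s` lists the singular values of `M`
(the square roots of the eigenvalues of `Mᴴ * M`) in nonincreasing order. -/
noncomputable def IsSingularValues (M : Matrix (Fin 3) (Fin 3) ℂ) (s : Fin 3 → ℝ) : Prop :=
  (∀ i j : Fin 3, i ≤ j → s j ≤ s i) ∧
  ∃ σ : Equiv.Perm (Fin 3), ∀ i,
    s i = Real.sqrt ((Matrix.posSemidef_conjTranspose_mul_self M).1.eigenvalues (σ i))

namespace WX

section WXaux

noncomputable def nsq (v : Fin 3 → ℂ) : ℝ := ∑ i, Complex.normSq (v i)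

lemma nsq_nonneg (v : Fin 3 → ℂ) : 0 ≤ nsq v :=
  Finset.sum_nonneg fun _ _ => Complex.normSq_nonneg _

lemma nsq_pos {v : Fin 3 → ℂ} (hv : v ≠ 0) : 0 < nsq v := by
  rcases Function.ne_iff.mp hv with ⟨i, hi⟩
  exact Finset.sum_pos' (fun j _ => Complex.normSq_nonneg _)
    ⟨i, Finset.mem_univ i, Complex.normSq_pos.mpr hi⟩

lemma star_dot (v : Fin 3 → ℂ) : star v ⬝ᵥ v = (nsq v : ℂ) := by
  simp only [dotProduct, nsq, Pi.star_apply, Complex.ofReal_sum]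
  refine Finset.sum_congr rfl fun i _ => ?_
  rw [Complex.star_def, Complex.normSq_eq_conj_mul_self]

/-- `UD M V μ` : `V` is unitary and diagonalizes `Mᴴ * M` with diagonal `μ`. -/
def UD (M V : Matrix (Fin 3) (Fin 3) ℂ) (μ : Fin 3 → ℝ) : Prop :=
  Vᴴ * V = 1 ∧ V * Vᴴ = 1 ∧
    Mᴴ * M = V * diagonal (fun i => (μ i : ℂ)) * Vᴴ

lemma unitary_dot {V : Matrix (Fin 3) (Fin 3) ℂ} (hV : Vᴴ * V = 1)
    (c d : Fin 3 → ℂ) : star (V *ᵥ c) ⬝ᵥ (V *ᵥ d) = star c ⬝ᵥ d := by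
  rw [star_mulVec, dotProduct_mulVec, vecMul_vecMul, hV, vecMul_one]

lemma UD.nsq_mulVec {M V : Matrix (Fin 3) (Fin 3) ℂ} {μ : Fin 3 → ℝ}
    (h : UD M V μ) (c : Fin 3 → ℂ) :
    nsq (M *ᵥ (V *ᵥ c)) = ∑ i, μ i * Complex.normSq (c i) := by
  have key : ((nsq (M *ᵥ (V *ᵥ c))) : ℂ) = ((∑ i, μ i * Complex.normSq (c i) : ℝ) : ℂ) := by
    rw [← star_dot]
    have h1 : ∀ x : Fin 3 → ℂ, star (M *ᵥ x) ⬝ᵥ (M *ᵥ x)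
        = star x ⬝ᵥ ((Mᴴ * M) *ᵥ x) := by
      intro x
      rw [star_mulVec, dotProduct_mulVec, dotProduct_mulVec, vecMul_vecMul]
    rw [h1, h.2.2]
    have h2 : (V * diagonal (fun i => (μ i : ℂ)) * Vᴴ) *ᵥ (V *ᵥ c)
        = V *ᵥ (diagonal (fun i => (μ i : ℂ)) *ᵥ c) := by
      rw [mulVec_mulVec, Matrix.mul_assoc, Matrix.mul_assoc, h.1, Matrix.mul_one,
        ← mulVec_mulVec]
    rw [h2, unitary_dot h.1]
    simp only [dotProduct, mulVec_diagonal, Pi.star_apply, Complex.ofReal_sum]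
    refine Finset.sum_congr rfl fun i _ => ?_
    rw [Complex.star_def, Complex.ofReal_mul, Complex.normSq_eq_conj_mul_self]
    ring
  exact_mod_cast key

lemma unitary_nsq_mulVec {V : Matrix (Fin 3) (Fin 3) ℂ} (hV : Vᴴ * V = 1)
    (c : Fin 3 → ℂ) : nsq (V *ᵥ c) = nsq c := by
  have key : ((nsq (V *ᵥ c)) : ℂ) = ((nsq c : ℝ) : ℂ) := by
    rw [← star_dot, ← star_dot, unitary_dot hV]
  exact_mod_cast key

lemma unitary_surj {V : Matrix (Fin 3) (Fin 3) ℂ} (hV : V * Vᴴ = 1)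
    (x : Fin 3 → ℂ) : x = V *ᵥ (Vᴴ *ᵥ x) := by
  rw [mulVec_mulVec, hV, one_mulVec]

lemma UD.nsq_le {M V : Matrix (Fin 3) (Fin 3) ℂ} {μ : Fin 3 → ℝ}
    (h : UD M V μ) (hμ : ∀ i, μ i ≤ μ 0) (x : Fin 3 → ℂ) :
    nsq (M *ᵥ x) ≤ μ 0 * nsq x := by
  have hx := unitary_surj h.2.1 x
  calc nsq (M *ᵥ x) = nsq (M *ᵥ (V *ᵥ (Vᴴ *ᵥ x))) := by rw [← hx]
    _ = ∑ i, μ i * Complex.normSq ((Vᴴ *ᵥ x) i) := h.nsq_mulVec _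
    _ ≤ ∑ i, μ 0 * Complex.normSq ((Vᴴ *ᵥ x) i) := by
        refine Finset.sum_le_sum fun i _ => ?_
        exact mul_le_mul_of_nonneg_right (hμ i) (Complex.normSq_nonneg _)
    _ = μ 0 * nsq (Vᴴ *ᵥ x) := by rw [nsq, Finset.mul_sum]
    _ = μ 0 * nsq x := by
        congr 1
        conv_rhs => rw [hx]
        rw [unitary_nsq_mulVec h.1]

lemma UD.nsq_ge {M V : Matrix (Fin 3) (Fin 3) ℂ} {μ : Fin 3 → ℝ}
    (h : UD M V μ) (hμ : ∀ i, μ 2 ≤ μ i) (x : Fin 3 → ℂ) :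
    μ 2 * nsq x ≤ nsq (M *ᵥ x) := by
  have hx := unitary_surj h.2.1 x
  calc μ 2 * nsq x = μ 2 * nsq (Vᴴ *ᵥ x) := by
        congr 1
        conv_lhs => rw [hx]
        rw [unitary_nsq_mulVec h.1]
    _ = ∑ i, μ 2 * Complex.normSq ((Vᴴ *ᵥ x) i) := by rw [nsq, Finset.mul_sum]
    _ ≤ ∑ i, μ i * Complex.normSq ((Vᴴ *ᵥ x) i) := by
        refine Finset.sum_le_sum fun i _ => ?_
        exact mul_le_mul_of_nonneg_right (hμ i) (Complex.normSq_nonneg _)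
    _ = nsq (M *ᵥ (V *ᵥ (Vᴴ *ᵥ x))) := (h.nsq_mulVec _).symm
    _ = nsq (M *ᵥ x) := by rw [← hx]

/-- Courant–Fischer-type lower bound for the second eigenvalue. -/
lemma cf2 {C V : Matrix (Fin 3) (Fin 3) ℂ} {μ : Fin 3 → ℝ}
    (hud : UD C V μ) (h21 : μ 2 ≤ μ 1)
    (u v : Fin 3 → ℂ) (k : ℝ)
    (hind : ∀ a b : ℂ, a • u + b • v = 0 → a = 0 ∧ b = 0)
    (hq : ∀ a b : ℂ, k * nsq (a • u + b • v) ≤ nsq (C *ᵥ (a • u + b • v))) :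
    k ≤ μ 1 := by
  set α := (Vᴴ *ᵥ u) 0 with hα
  set β := (Vᴴ *ᵥ v) 0 with hβ
  obtain ⟨a, b, hab0, hd0⟩ : ∃ a b : ℂ, ¬(a = 0 ∧ b = 0) ∧ a * α + b * β = 0 := by
    by_cases h : α = 0
    · exact ⟨1, 0, by simp, by simp [h]⟩
    · exact ⟨β, -α, fun hc => h (by simpa using hc.2), by ring⟩
  set x := a • u + b • v with hx
  have hxne : x ≠ 0 := fun h0 => hab0 (hind a b h0)
  set d := Vᴴ *ᵥ x with hd
  have hxd : x = V *ᵥ d := unitary_surj hud.2.1 x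
  have hd00 : d 0 = 0 := by
    have : d 0 = a * α + b * β := by
      simp only [hd, hx, hα, hβ, mulVec_add, mulVec_smul, Pi.add_apply, Pi.smul_apply,
        smul_eq_mul]
    rw [this, hd0]
  have hnsq : nsq x = nsq d := by
    conv_lhs => rw [hxd]
    rw [unitary_nsq_mulVec hud.1]
  have hpos : 0 < nsq x := nsq_pos hxne
  have h1 : k * nsq x ≤ nsq (C *ᵥ x) := hq a b
  have h2 : nsq (C *ᵥ x) = ∑ i, μ i * Complex.normSq (d i) := by
    conv_lhs => rw [hxd]
    exact hud.nsq_mulVec d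
  have hnsqd : nsq d = Complex.normSq (d 0) + Complex.normSq (d 1) + Complex.normSq (d 2) :=
    Fin.sum_univ_three _
  have h3 : ∑ i, μ i * Complex.normSq (d i) ≤ μ 1 * nsq d := by
    rw [Fin.sum_univ_three, hnsqd, hd00]
    simp only [Complex.normSq_zero, mul_zero, zero_add]
    nlinarith [Complex.normSq_nonneg (d 1), Complex.normSq_nonneg (d 2)]
  have hfin : k * nsq x ≤ μ 1 * nsq x := by
    rw [hnsq]
    rw [hnsq] at h1
    exact h1.trans (h2.symm ▸ h3 : nsq (C *ᵥ x) ≤ μ 1 * nsq d)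
  exact le_of_mul_le_mul_right hfin hpos

lemma UD.det_eq {M V : Matrix (Fin 3) (Fin 3) ℂ} {μ : Fin 3 → ℝ} (h : UD M V μ) :
    det (Mᴴ * M) = ((∏ i, μ i : ℝ) : ℂ) := by
  rw [h.2.2, det_mul, det_mul, det_diagonal]
  have h1 : det V * det Vᴴ = 1 := by
    rw [← det_mul, h.2.1, det_one]
  push_cast
  calc det V * (∏ i, (μ i : ℂ)) * det Vᴴ = (det V * det Vᴴ) * ∏ i, (μ i : ℂ) := by ring
    _ = ∏ i, (μ i : ℂ) := by rw [h1, one_mul]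

lemma sq_le' {x y : ℝ} (hy : 0 ≤ y) (h : x ^ 2 ≤ y ^ 2) (hx : 0 ≤ x) : x ≤ y := by
  nlinarith

lemma sq_eq' {x y : ℝ} (hx : 0 ≤ x) (hy : 0 ≤ y) (h : x ^ 2 = y ^ 2) : x = y := by
  nlinarith [sq_nonneg (x - y), sq_nonneg (x + y)]

lemma extract {M : Matrix (Fin 3) (Fin 3) ℂ} {s : Fin 3 → ℝ}
    (h : IsSingularValues M s) :
    (∀ i j : Fin 3, i ≤ j → s j ≤ s i) ∧ (∀ i, 0 ≤ s i) ∧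
      ∃ V, UD M V (fun i => s i ^ 2) := by
  obtain ⟨hsort, σ, hs⟩ := h
  set hH := (Matrix.posSemidef_conjTranspose_mul_self M).1 with hHdef
  have hnn : ∀ i, 0 ≤ hH.eigenvalues i :=
    (Matrix.posSemidef_conjTranspose_mul_self M).eigenvalues_nonneg
  have hsnn : ∀ i, 0 ≤ s i := fun i => (hs i) ▸ Real.sqrt_nonneg _
  have hsq : ∀ i, s i ^ 2 = hH.eigenvalues (σ i) := fun i => by
    rw [hs i, Real.sq_sqrt (hnn _)]
  refine ⟨hsort, hsnn, ?_⟩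
  set U : Matrix (Fin 3) (Fin 3) ℂ := (hH.eigenvectorUnitary : Matrix (Fin 3) (Fin 3) ℂ) with hU
  have hU1 : Uᴴ * U = 1 := by
    rw [← Matrix.star_eq_conjTranspose]
    exact Matrix.mem_unitaryGroup_iff'.mp (hH.eigenvectorUnitary).2
  have hU2 : U * Uᴴ = 1 := by
    rw [← Matrix.star_eq_conjTranspose]
    exact Matrix.mem_unitaryGroup_iff.mp (hH.eigenvectorUnitary).2
  have hspec : Mᴴ * M = U * diagonal (RCLike.ofReal ∘ hH.eigenvalues) * Uᴴ := by
    have := hH.spectral_theorem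
    rwa [Unitary.conjStarAlgAut_apply, Matrix.star_eq_conjTranspose] at this
  refine ⟨U.submatrix id σ, ?_, ?_, ?_⟩
  · rw [conjTranspose_submatrix]
    rw [show (Uᴴ.submatrix ⇑σ id) * (U.submatrix id ⇑σ)
        = (Uᴴ * U).submatrix ⇑σ ⇑σ from
      (Matrix.submatrix_mul _ _ _ id _ Function.bijective_id).symm]
    rw [hU1, Matrix.submatrix_one_equiv σ]
  · rw [conjTranspose_submatrix]
    rw [show (U.submatrix id ⇑σ) * (Uᴴ.submatrix ⇑σ id)
        = (U * Uᴴ).submatrix id id from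
      (Matrix.submatrix_mul _ _ _ ⇑σ _ σ.bijective).symm]
    rw [hU2, Matrix.submatrix_id_id]
  · have hdiagfun : (fun i => ((s i ^ 2 : ℝ) : ℂ))
        = (RCLike.ofReal ∘ hH.eigenvalues) ∘ ⇑σ := by
      funext i
      simp only [Function.comp_apply, hsq i]
      norm_cast
    have hspec2 : Mᴴ * M = U * diagonal (RCLike.ofReal ∘ hH.eigenvalues) * Uᴴ := hspec
    calc Mᴴ * M = U * diagonal (RCLike.ofReal ∘ hH.eigenvalues) * Uᴴ := hspec2
      _ = (U * diagonal (RCLike.ofReal ∘ hH.eigenvalues) * Uᴴ).submatrix id id :=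
          (Matrix.submatrix_id_id _).symm
      _ = (U * diagonal (RCLike.ofReal ∘ hH.eigenvalues)).submatrix id ⇑σ
            * Uᴴ.submatrix ⇑σ id :=
          Matrix.submatrix_mul _ _ id ⇑σ id σ.bijective
      _ = (U.submatrix id ⇑σ * (diagonal (RCLike.ofReal ∘ hH.eigenvalues)).submatrix ⇑σ ⇑σ)
            * Uᴴ.submatrix ⇑σ id := by
          rw [Matrix.submatrix_mul U _ id ⇑σ ⇑σ σ.bijective]
      _ = U.submatrix id ⇑σ * diagonal (fun i => ((s i ^ 2 : ℝ) : ℂ))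
            * (U.submatrix id ⇑σ)ᴴ := by
          rw [Matrix.submatrix_diagonal_equiv, ← hdiagfun, conjTranspose_submatrix]

end WXaux
end WX

open WX in
theorem stmt9 (A B : Matrix (Fin 3) (Fin 3) ℂ) (sA sB sAB : Fin 3 → ℝ)
    (hA : IsSingularValues A sA) (hB : IsSingularValues B sB)
    (hAB : IsSingularValues (A * B) sAB) :
    sA 1 * sB 2 + sA 2 * sB 1 ≤ sAB 1 + sAB 2 := by
  obtain ⟨hAs, hAn, VA, hUA⟩ := extract hA
  obtain ⟨hBs, hBn, VB, hUB⟩ := extract hB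
  obtain ⟨hCs, hCn, VC, hUC⟩ := extract hAB
  set μA : Fin 3 → ℝ := fun i => sA i ^ 2 with hμA
  set μB : Fin 3 → ℝ := fun i => sB i ^ 2 with hμB
  set μC : Fin 3 → ℝ := fun i => sAB i ^ 2 with hμC
  have hle2 : ∀ i : Fin 3, i ≤ 2 := by decide
  have hμAmax : ∀ i, μA i ≤ μA 0 := fun i => pow_le_pow_left₀ (hAn i) (hAs 0 i (Fin.zero_le i)) 2
  have hμBmax : ∀ i, μB i ≤ μB 0 := fun i => pow_le_pow_left₀ (hBn i) (hBs 0 i (Fin.zero_le i)) 2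
  have hμAmin : ∀ i, μA 2 ≤ μA i := fun i => pow_le_pow_left₀ (hAn 2) (hAs i 2 (hle2 i)) 2
  have hμBmin : ∀ i, μB 2 ≤ μB i := fun i => pow_le_pow_left₀ (hBn 2) (hBs i 2 (hle2 i)) 2
  have hμC21 : μC 2 ≤ μC 1 := pow_le_pow_left₀ (hCn 2) (hCs 1 2 (hle2 1)) 2
  have hμAnn : ∀ i, 0 ≤ μA i := fun i => sq_nonneg _
  have hμBnn : ∀ i, 0 ≤ μB i := fun i => sq_nonneg _
  have hμCnn : ∀ i, 0 ≤ μC i := fun i => sq_nonneg _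
  -- delta vectors
  set δ0 : Fin 3 → ℂ := Pi.single 0 1 with hδ0
  set δ1 : Fin 3 → ℂ := Pi.single 1 1 with hδ1
  have hwval : ∀ a b : ℂ, (a • δ0 + b • δ1) 0 = a ∧ (a • δ0 + b • δ1) 1 = b
      ∧ (a • δ0 + b • δ1) 2 = 0 := by
    intro a b
    refine ⟨?_, ?_, ?_⟩ <;>
      simp [hδ0, hδ1, Pi.single_apply]
  have hnsqw : ∀ a b : ℂ, nsq (a • δ0 + b • δ1)
      = Complex.normSq a + Complex.normSq b := by
    intro a b
    obtain ⟨h0, h1, h2⟩ := hwval a b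
    rw [nsq, Fin.sum_univ_three, h0, h1, h2]
    simp
  ------------------------------------------------------------------
  -- Inequality I : μC 0 ≤ μA 0 * μB 0
  ------------------------------------------------------------------
  have ineq1 : μC 0 ≤ μA 0 * μB 0 := by
    set x : Fin 3 → ℂ := VC *ᵥ δ0 with hxdef
    have e1 : nsq ((A * B) *ᵥ x) = μC 0 := by
      rw [hxdef, hUC.nsq_mulVec, Fin.sum_univ_three]
      simp [hδ0, Pi.single_apply]
    have e2 : nsq x = 1 := by
      rw [hxdef, unitary_nsq_mulVec hUC.1, nsq, Fin.sum_univ_three]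
      simp [hδ0, Pi.single_apply]
    have e3 : (A * B) *ᵥ x = A *ᵥ (B *ᵥ x) := by rw [← mulVec_mulVec]
    calc μC 0 = nsq (A *ᵥ (B *ᵥ x)) := by rw [← e3, e1]
      _ ≤ μA 0 * nsq (B *ᵥ x) := hUA.nsq_le hμAmax _
      _ ≤ μA 0 * (μB 0 * nsq x) :=
          mul_le_mul_of_nonneg_left (hUB.nsq_le hμBmax _) (hμAnn 0)
      _ = μA 0 * μB 0 := by rw [e2, mul_one]
  ------------------------------------------------------------------
  -- Inequality II : μA 2 * μB 1 ≤ μC 1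
  ------------------------------------------------------------------
  have ineq2 : μA 2 * μB 1 ≤ μC 1 := by
    set u : Fin 3 → ℂ := VB *ᵥ δ0 with hu
    set v : Fin 3 → ℂ := VB *ᵥ δ1 with hv
    have comb : ∀ a b : ℂ, a • u + b • v = VB *ᵥ (a • δ0 + b • δ1) := by
      intro a b
      rw [mulVec_add, mulVec_smul, mulVec_smul]
    refine cf2 hUC hμC21 u v _ ?_ ?_
    · intro a b h0
      rw [comb] at h0
      have hw : (a • δ0 + b • δ1 : Fin 3 → ℂ) = 0 := by
        have := congrArg (fun z => VBᴴ *ᵥ z) h0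
        simpa [mulVec_mulVec, hUB.1] using this
      obtain ⟨e0, e1, _⟩ := hwval a b
      rw [hw] at e0 e1
      exact ⟨e0.symm, e1.symm⟩
    · intro a b
      rw [comb]
      set w : Fin 3 → ℂ := a • δ0 + b • δ1 with hw
      have hnw : nsq (VB *ᵥ w) = nsq w := unitary_nsq_mulVec hUB.1 w
      have hABx : (A * B) *ᵥ (VB *ᵥ w) = A *ᵥ (B *ᵥ (VB *ᵥ w)) := by
        rw [← mulVec_mulVec]
      have hBlow : μB 1 * nsq (VB *ᵥ w) ≤ nsq (B *ᵥ (VB *ᵥ w)) := by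
        rw [hUB.nsq_mulVec w, Fin.sum_univ_three, hnw, hnsqw a b]
        obtain ⟨e0, e1, e2⟩ := hwval a b
        rw [← hw] at e0 e1 e2
        rw [e0, e1, e2]
        simp only [Complex.normSq_zero, mul_zero, add_zero]
        nlinarith [Complex.normSq_nonneg a, Complex.normSq_nonneg b, hμBmax 1,
          Complex.normSq_nonneg b]
      calc μA 2 * μB 1 * nsq (VB *ᵥ w)
          = μA 2 * (μB 1 * nsq (VB *ᵥ w)) := by ring
        _ ≤ μA 2 * nsq (B *ᵥ (VB *ᵥ w)) :=
            mul_le_mul_of_nonneg_left hBlow (hμAnn 2)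
        _ ≤ nsq (A *ᵥ (B *ᵥ (VB *ᵥ w))) := hUA.nsq_ge hμAmin _
        _ = nsq ((A * B) *ᵥ (VB *ᵥ w)) := by rw [hABx]
  ------------------------------------------------------------------
  -- Inequality III : μA 1 * μB 2 ≤ μC 1
  ------------------------------------------------------------------
  have ineq3 : μA 1 * μB 2 ≤ μC 1 := by
    rcases eq_or_lt_of_le (hμBnn 2) with hb0 | hbpos
    · calc μA 1 * μB 2 = 0 := by rw [← hb0, mul_zero]
        _ ≤ μC 1 := hμCnn 1
    · -- B is invertible
      have hdetB : B.det ≠ 0 := by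
        intro hd
        have h1 : det (Bᴴ * B) = ((∏ i, μB i : ℝ) : ℂ) := hUB.det_eq
        rw [det_mul, hd, mul_zero] at h1
        have h2 : (0 : ℝ) < ∏ i, μB i := by
          rw [Fin.prod_univ_three]
          exact mul_pos (mul_pos (lt_of_lt_of_le hbpos (hμBmin 0))
            (lt_of_lt_of_le hbpos (hμBmin 1))) hbpos
        have h3 : ((∏ i, μB i : ℝ) : ℂ) = 0 := h1.symm
        rw [Complex.ofReal_eq_zero] at h3
        exact absurd h3 (ne_of_gt h2)
      have hdetU : IsUnit B.det := isUnit_iff_ne_zero.mpr hdetB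
      have hBinv : ∀ y : Fin 3 → ℂ, B *ᵥ (B⁻¹ *ᵥ y) = y := by
        intro y
        rw [mulVec_mulVec, Matrix.mul_nonsing_inv B hdetU, one_mulVec]
      set u : Fin 3 → ℂ := B⁻¹ *ᵥ (VA *ᵥ δ0) with hu
      set v : Fin 3 → ℂ := B⁻¹ *ᵥ (VA *ᵥ δ1) with hv
      have comb : ∀ a b : ℂ, a • u + b • v = B⁻¹ *ᵥ (VA *ᵥ (a • δ0 + b • δ1)) := by
        intro a b
        rw [mulVec_add, mulVec_smul, mulVec_smul, mulVec_add, mulVec_smul, mulVec_smul]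
      have hBx : ∀ a b : ℂ, B *ᵥ (a • u + b • v) = VA *ᵥ (a • δ0 + b • δ1) := by
        intro a b
        rw [comb, hBinv]
      refine cf2 hUC hμC21 u v _ ?_ ?_
      · intro a b h0
        have h1 : VA *ᵥ (a • δ0 + b • δ1) = 0 := by
          rw [← hBx a b, h0, mulVec_zero]
        have hw : (a • δ0 + b • δ1 : Fin 3 → ℂ) = 0 := by
          have := congrArg (fun z => VAᴴ *ᵥ z) h1
          simpa [mulVec_mulVec, hUA.1] using this
        obtain ⟨e0, e1, _⟩ := hwval a b
        rw [hw] at e0 e1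
        exact ⟨e0.symm, e1.symm⟩
      · intro a b
        set x : Fin 3 → ℂ := a • u + b • v with hx
        set w : Fin 3 → ℂ := a • δ0 + b • δ1 with hw
        have hABx : (A * B) *ᵥ x = A *ᵥ (VA *ᵥ w) := by
          rw [← mulVec_mulVec, hBx a b]
        have hAhigh : μA 1 * nsq (VA *ᵥ w) ≤ nsq (A *ᵥ (VA *ᵥ w)) := by
          rw [hUA.nsq_mulVec w, Fin.sum_univ_three, unitary_nsq_mulVec hUA.1, hnsqw a b]
          obtain ⟨e0, e1, e2⟩ := hwval a b
          rw [← hw] at e0 e1 e2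
          rw [e0, e1, e2]
          simp only [Complex.normSq_zero, mul_zero, add_zero]
          nlinarith [Complex.normSq_nonneg a, Complex.normSq_nonneg b, hμAmax 1]
        have hBlow2 : μB 2 * nsq x ≤ nsq (B *ᵥ x) := hUB.nsq_ge hμBmin x
        have hVAw : nsq (VA *ᵥ w) = nsq (B *ᵥ x) := by rw [hBx a b]
        calc μA 1 * μB 2 * nsq x = μA 1 * (μB 2 * nsq x) := by ring
          _ ≤ μA 1 * nsq (B *ᵥ x) := mul_le_mul_of_nonneg_left hBlow2 (hμAnn 1)
          _ = μA 1 * nsq (VA *ᵥ w) := by rw [hVAw]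
          _ ≤ nsq (A *ᵥ (VA *ᵥ w)) := hAhigh
          _ = nsq ((A * B) *ᵥ x) := by rw [hABx]
  ------------------------------------------------------------------
  -- Determinant identity : ∏ μC = ∏ μA * ∏ μB
  ------------------------------------------------------------------
  have hdet : (∏ i, μC i) = (∏ i, μA i) * (∏ i, μB i) := by
    have h1 : det ((A * B)ᴴ * (A * B)) = det (Aᴴ * A) * det (Bᴴ * B) := by
      rw [conjTranspose_mul]
      simp only [det_mul]
      ring
    rw [hUC.det_eq, hUA.det_eq, hUB.det_eq] at h1
    exact_mod_cast h1
  ------------------------------------------------------------------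
  -- Transfer to singular-value level
  ------------------------------------------------------------------
  have hc1 : sAB 0 ≤ sA 0 * sB 0 := by
    refine sq_le' (mul_nonneg (hAn 0) (hBn 0)) ?_ (hCn 0)
    calc sAB 0 ^ 2 = μC 0 := rfl
      _ ≤ μA 0 * μB 0 := ineq1
      _ = (sA 0 * sB 0) ^ 2 := by rw [hμA, hμB]; ring
  have hc2a : sA 2 * sB 1 ≤ sAB 1 := by
    refine sq_le' (hCn 1) ?_ (mul_nonneg (hAn 2) (hBn 1))
    calc (sA 2 * sB 1) ^ 2 = μA 2 * μB 1 := by rw [hμA, hμB]; ring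
      _ ≤ μC 1 := ineq2
      _ = sAB 1 ^ 2 := rfl
  have hc2b : sA 1 * sB 2 ≤ sAB 1 := by
    refine sq_le' (hCn 1) ?_ (mul_nonneg (hAn 1) (hBn 2))
    calc (sA 1 * sB 2) ^ 2 = μA 1 * μB 2 := by rw [hμA, hμB]; ring
      _ ≤ μC 1 := ineq3
      _ = sAB 1 ^ 2 := rfl
  have hprod : sAB 0 * sAB 1 * sAB 2 = (sA 0 * sA 1 * sA 2) * (sB 0 * sB 1 * sB 2) := by
    refine sq_eq' (mul_nonneg (mul_nonneg (hCn 0) (hCn 1)) (hCn 2))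
      (mul_nonneg (mul_nonneg (mul_nonneg (hAn 0) (hAn 1)) (hAn 2))
        (mul_nonneg (mul_nonneg (hBn 0) (hBn 1)) (hBn 2))) ?_
    have := hdet
    rw [Fin.prod_univ_three, Fin.prod_univ_three, Fin.prod_univ_three] at this
    calc (sAB 0 * sAB 1 * sAB 2) ^ 2 = μC 0 * μC 1 * μC 2 := by rw [hμC]; ring
      _ = (μA 0 * μA 1 * μA 2) * (μB 0 * μB 1 * μB 2) := this
      _ = ((sA 0 * sA 1 * sA 2) * (sB 0 * sB 1 * sB 2)) ^ 2 := by
          rw [hμA, hμB]; ring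
  ------------------------------------------------------------------
  -- Final elementary argument
  ------------------------------------------------------------------
  rcases eq_or_lt_of_le (hCn 1) with hc20 | hc2pos
  · -- sAB 1 = 0
    have h1 : sA 1 * sB 2 ≤ 0 := by rw [hc20]; exact hc2b
    have h2 : sA 2 * sB 1 ≤ 0 := by rw [hc20]; exact hc2a
    have h3 : 0 ≤ sAB 2 := hCn 2
    linarith [hc20]
  · have hc1pos : 0 < sAB 0 := lt_of_lt_of_le hc2pos (hCs 0 1 (by decide))
    have ha1b1pos : 0 < sA 0 * sB 0 := lt_of_lt_of_le hc1pos hc1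
    have hprod23 : (sA 1 * sA 2) * (sB 1 * sB 2) ≤ sAB 1 * sAB 2 := by
      have key : (sA 0 * sB 0) * ((sA 1 * sA 2) * (sB 1 * sB 2))
          ≤ (sA 0 * sB 0) * (sAB 1 * sAB 2) := by
        calc (sA 0 * sB 0) * ((sA 1 * sA 2) * (sB 1 * sB 2))
            = (sA 0 * sA 1 * sA 2) * (sB 0 * sB 1 * sB 2) := by ring
          _ = sAB 0 * (sAB 1 * sAB 2) := by rw [← hprod]; ring
          _ ≤ (sA 0 * sB 0) * (sAB 1 * sAB 2) := by
              refine mul_le_mul_of_nonneg_right hc1 ?_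
              exact mul_nonneg (hCn 1) (hCn 2)
      exact le_of_mul_le_mul_left key ha1b1pos
    nlinarith [mul_nonneg (sub_nonneg.mpr hc2b) (sub_nonneg.mpr hc2a), hc2pos,
      hCn 2, hprod23]
end

section
/- Let λ_1 ≥ λ_2 ≥ ... ≥ λ_6 ≥ 0 be real numbers and suppose the matrix Λ_1 = [[2λ_6, λ_2, λ_1],[λ_2, 2λ_3, λ_4],[λ_1, λ_4, 2λ_5]] is positive semidefinite. Then the matrices Λ_2 = [[2λ_6, λ_4, λ_1],[λ_4, 2λ_3, λ_2],[λ_1, λ_2, 2λ_5]], Λ_3 = [[2λ_6, λ_5, λ_1],[λ_5, 2λ_3, λ_2],[λ_1, λ_2, 2λ_4]], and Λ_4 = [[2λ_6, λ_5, λ_1],[λ_5, 2λ_4, λ_2],[λ_1, λ_2, 2λ_3]] are also positive semidefinite. -/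
open Matrix

lemma quad_nonneg (a b c d e f x y z : ℝ) (ha : 0 ≤ a) (hd : 0 ≤ d) (hf : 0 ≤ f)
    (m1 : 0 ≤ a*d - b^2) (m2 : 0 ≤ a*f - c^2) (m3 : 0 ≤ d*f - e^2)
    (hdet : 0 ≤ a*d*f + 2*b*c*e - a*e^2 - f*b^2 - d*c^2) :
    0 ≤ a*x^2 + d*y^2 + f*z^2 + 2*b*x*y + 2*c*x*z + 2*e*y*z := by
  rcases ha.eq_or_lt with ha0 | ha0
  · have hb : b = 0 := by nlinarith [sq_nonneg b]
    have hc : c = 0 := by nlinarith [sq_nonneg c]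
    subst hb; subst hc
    rcases hd.eq_or_lt with hd0 | hd0
    · have he : e = 0 := by nlinarith [sq_nonneg e]
      subst he
      nlinarith [sq_nonneg z, sq_nonneg x]
    · nlinarith [sq_nonneg (d*y + e*z), mul_nonneg m3 (sq_nonneg z), sq_nonneg x]
  · rcases m1.eq_or_lt with hp0 | hp0
    · have hid : (a*e - b*c)^2 = (a*d - b^2)*(a*f - c^2)
          - a*(a*d*f + 2*b*c*e - a*e^2 - f*b^2 - d*c^2) := by ring
      have hq : a*e - b*c = 0 := by
        have h2 : (a*e - b*c)^2 ≤ 0 := by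
          rw [hid, ← hp0]; nlinarith [mul_nonneg ha hdet]
        nlinarith [sq_nonneg (a*e - b*c)]
      have key : a*(a*x^2 + d*y^2 + f*z^2 + 2*b*x*y + 2*c*x*z + 2*e*y*z)
          = (a*x + b*y + c*z)^2 + (a*d - b^2)*y^2 + 2*(a*e - b*c)*y*z
            + (a*f - c^2)*z^2 := by ring
      rw [← hp0, hq] at key
      nlinarith [sq_nonneg (a*x + b*y + c*z), mul_nonneg m2 (sq_nonneg z), key]
    · nlinarith [mul_pos ha0 hp0,
        mul_nonneg hp0.le (sq_nonneg (a*x + b*y + c*z)),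
        sq_nonneg ((a*d - b^2)*y + (a*e - b*c)*z),
        mul_nonneg (mul_nonneg ha hdet) (sq_nonneg z)]

lemma psd_of_minors (a b c d e f : ℝ) (ha : 0 ≤ a) (hd : 0 ≤ d) (hf : 0 ≤ f)
    (m1 : 0 ≤ a*d - b^2) (m2 : 0 ≤ a*f - c^2) (m3 : 0 ≤ d*f - e^2)
    (hdet : 0 ≤ a*d*f + 2*b*c*e - a*e^2 - f*b^2 - d*c^2) :
    (!![a, b, c; b, d, e; c, e, f] : Matrix (Fin 3) (Fin 3) ℝ).PosSemidef := by
  rw [Matrix.posSemidef_iff_dotProduct_mulVec]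
  constructor
  · unfold Matrix.IsHermitian
    ext i j
    fin_cases i <;> fin_cases j <;> simp [Matrix.conjTranspose_apply]
  · intro x
    have := quad_nonneg a b c d e f (x 0) (x 1) (x 2) ha hd hf m1 m2 m3 hdet
    simp [Matrix.mulVec, dotProduct, Fin.sum_univ_three]
    ring_nf
    ring_nf at this
    linarith

lemma psd_det_nonneg {n : Type*} [Fintype n] [DecidableEq n] {M : Matrix n n ℝ}
    (hM : M.PosSemidef) : 0 ≤ M.det := by
  rw [hM.isHermitian.det_eq_prod_eigenvalues]
  exact Finset.prod_nonneg fun i _ => hM.eigenvalues_nonneg i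

set_option maxHeartbeats 2000000 in
theorem stmt10 (lam : Fin 6 → ℝ)
    (hsort : ∀ i j : Fin 6, i ≤ j → lam j ≤ lam i) (hnonneg : 0 ≤ lam 5)
    (h1 : (!![2 * lam 5, lam 1, lam 0;
              lam 1, 2 * lam 2, lam 3;
              lam 0, lam 3, 2 * lam 4] : Matrix (Fin 3) (Fin 3) ℝ).PosSemidef) :
    (!![2 * lam 5, lam 3, lam 0;
        lam 3, 2 * lam 2, lam 1;
        lam 0, lam 1, 2 * lam 4] : Matrix (Fin 3) (Fin 3) ℝ).PosSemidef ∧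
    (!![2 * lam 5, lam 4, lam 0;
        lam 4, 2 * lam 2, lam 1;
        lam 0, lam 1, 2 * lam 3] : Matrix (Fin 3) (Fin 3) ℝ).PosSemidef ∧
    (!![2 * lam 5, lam 4, lam 0;
        lam 4, 2 * lam 3, lam 1;
        lam 0, lam 1, 2 * lam 2] : Matrix (Fin 3) (Fin 3) ℝ).PosSemidef := by
  set l0 := lam 0; set l1 := lam 1; set l2 := lam 2
  set l3 := lam 3; set l4 := lam 4; set l5 := lam 5
  have h01 : l1 ≤ l0 := hsort 0 1 (by decide)
  have h12 : l2 ≤ l1 := hsort 1 2 (by decide)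
  have h23 : l3 ≤ l2 := hsort 2 3 (by decide)
  have h34 : l4 ≤ l3 := hsort 3 4 (by decide)
  have h45 : l5 ≤ l4 := hsort 4 5 (by decide)
  have h5 : (0:ℝ) ≤ l5 := hnonneg
  have h4 : (0:ℝ) ≤ l4 := le_trans h5 h45
  have h3 : (0:ℝ) ≤ l3 := le_trans h4 h34
  have h2 : (0:ℝ) ≤ l2 := le_trans h3 h23
  have h1' : (0:ℝ) ≤ l1 := le_trans h2 h12
  have h0 : (0:ℝ) ≤ l0 := le_trans h1' h01
  -- key minor: 4 l5 l4 ≥ l0 ^ 2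
  have hkey : 0 ≤ 4 * l5 * l4 - l0 ^ 2 := by
    have hsub := psd_det_nonneg (h1.submatrix ![(0 : Fin 3), 2])
    rw [Matrix.det_fin_two] at hsub
    simp [Matrix.det_fin_two] at hsub
    nlinarith [hsub]
  -- determinant of Λ₁
  have hdet1 : 0 ≤ 8*l5*l2*l4 + 2*l1*l0*l3 - 2*l5*l3^2 - 2*l4*l1^2 - 2*l2*l0^2 := by
    have hd := psd_det_nonneg h1
    simp [Matrix.det_fin_three] at hd
    nlinarith [hd]
  have hdet2 : 0 ≤ 8*l5*l2*l4 + 2*l3*l0*l1 - 2*l5*l1^2 - 2*l4*l3^2 - 2*l2*l0^2 := by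
    nlinarith [hdet1, mul_nonneg (sub_nonneg.2 h45) (mul_nonneg (add_nonneg h1' h3)
      (sub_nonneg.2 (le_trans h23 h12)))]
  have hfac : 0 ≤ 4*l2*l5 + l3*l4 - l0*l1 := by
    nlinarith [hkey, mul_nonneg h5 (sub_nonneg.2 (le_trans h34 h23)),
      mul_nonneg h3 h4, mul_nonneg h0 (sub_nonneg.2 h01)]
  have hdet3 : 0 ≤ 8*l5*l2*l3 + 2*l4*l0*l1 - 2*l5*l1^2 - 2*l3*l4^2 - 2*l2*l0^2 := by
    nlinarith [hdet2, mul_nonneg hfac (sub_nonneg.2 h34)]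
  have hdet4 : 0 ≤ 8*l5*l3*l2 + 2*l4*l0*l1 - 2*l5*l1^2 - 2*l2*l4^2 - 2*l3*l0^2 := by
    nlinarith [hdet3, mul_nonneg (sub_nonneg.2 h23)
      (mul_nonneg (add_nonneg h0 h4) (sub_nonneg.2 (le_trans h34 (le_trans h23 (le_trans h12 h01)))))]
  refine ⟨?_, ?_, ?_⟩
  · have := psd_of_minors (2*l5) l3 l0 (2*l2) l1 (2*l4)
      (by linarith) (by linarith) (by linarith)
      (by nlinarith [hkey, mul_nonneg h5 (sub_nonneg.2 (le_trans h34 h23)),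
            sq_nonneg l3, sq_nonneg l0])
      (by nlinarith [hkey])
      (by nlinarith [hkey, mul_nonneg h4 (sub_nonneg.2 (le_trans h45 (le_trans h34 h23)))])
      (by nlinarith [hdet2])
    exact this
  · have := psd_of_minors (2*l5) l4 l0 (2*l2) l1 (2*l3)
      (by linarith) (by linarith) (by linarith)
      (by nlinarith [hkey, mul_nonneg h5 (sub_nonneg.2 (le_trans h34 h23))])
      (by nlinarith [hkey, mul_nonneg h5 (sub_nonneg.2 h34)])
      (by nlinarith [hkey, mul_nonneg h4 (sub_nonneg.2 (le_trans h45 h34)),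
            mul_nonneg (sub_nonneg.2 (le_trans h45 (le_trans h34 h23))) h3,
            mul_nonneg h2 (sub_nonneg.2 h34)])
      (by nlinarith [hdet3])
    exact this
  · have := psd_of_minors (2*l5) l4 l0 (2*l3) l1 (2*l2)
      (by linarith) (by linarith) (by linarith)
      (by nlinarith [hkey, mul_nonneg h5 (sub_nonneg.2 h34)])
      (by nlinarith [hkey, mul_nonneg h5 (sub_nonneg.2 (le_trans h34 h23))])
      (by nlinarith [hkey, mul_nonneg h3 (sub_nonneg.2 (le_trans h45 (le_trans h34 h23))),
            mul_nonneg (sub_nonneg.2 (le_trans h45 h34)) h2])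
      (by nlinarith [hdet4])
    exact this
end

section
/- Let μ_1 ≥ μ_2 ≥ μ_3 be real numbers with μ_2 ≥ 0 and μ_3 ≥ −√(μ_1 μ_2). Define the 4×4 matrix X with x_{1,1} = μ_1, x_{4,4} = μ_2, x_{1,4} = x_{4,1} = μ_3, and all other entries 0. Then X is positive semidefinite, and W = P X^Γ P (where P is the orthogonal projection onto the symmetric subspace of C^2 ⊗ C^2 and Γ is the partial transpose) has eigenvalues μ_1, μ_2, μ_3, 0 with eigenvectors e_1⊗e_1, e_2⊗e_2, e_2⊗e_1 + e_1⊗e_2, e_2⊗e_1 − e_1⊗e_2 respectively. -/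
open Matrix ComplexOrder

/-- Standard basis vector e_a ⊗ e_b of ℂ^2 ⊗ ℂ^2. -/
noncomputable def eTens (a b : Fin 2) : Fin 2 × Fin 2 → ℂ :=
  fun p => if p = (a, b) then 1 else 0

set_option maxHeartbeats 1600000 in
theorem stmt12 (μ : Fin 3 → ℝ)
    (hsort : ∀ i j : Fin 3, i ≤ j → μ j ≤ μ i) (h2 : 0 ≤ μ 1)
    (h3 : -Real.sqrt (μ 0 * μ 1) ≤ μ 2)
    (X : Matrix (Fin 2 × Fin 2) (Fin 2 × Fin 2) ℂ)
    (hX : X = fun p q =>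
      if p = (0, 0) ∧ q = (0, 0) then ((μ 0 : ℝ) : ℂ)
      else if p = (1, 1) ∧ q = (1, 1) then ((μ 1 : ℝ) : ℂ)
      else if (p = (0, 0) ∧ q = (1, 1)) ∨ (p = (1, 1) ∧ q = (0, 0)) then ((μ 2 : ℝ) : ℂ)
      else 0)
    (W : Matrix (Fin 2 × Fin 2) (Fin 2 × Fin 2) ℂ)
    (hW : W = symProj 2 * ptrans X * symProj 2) :
    X.PosSemidef ∧
    W.mulVec (eTens 0 0) = ((μ 0 : ℝ) : ℂ) • eTens 0 0 ∧
    W.mulVec (eTens 1 1) = ((μ 1 : ℝ) : ℂ) • eTens 1 1 ∧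
    W.mulVec (eTens 1 0 + eTens 0 1) = ((μ 2 : ℝ) : ℂ) • (eTens 1 0 + eTens 0 1) ∧
    W.mulVec (eTens 1 0 - eTens 0 1) = (0 : ℂ) • (eTens 1 0 - eTens 0 1) := by
  have h10 : μ 1 ≤ μ 0 := hsort 0 1 (by decide)
  have h0 : 0 ≤ μ 0 := le_trans h2 h10
  have h21 : μ 2 ≤ μ 1 := hsort 1 2 (by decide)
  refine ⟨posSemidef_iff_dotProduct_mulVec.mpr ⟨?_, ?_⟩, ?_, ?_, ?_, ?_⟩
  · ext ⟨i, j⟩ ⟨k, l⟩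
    fin_cases i <;> fin_cases j <;> fin_cases k <;> fin_cases l <;>
      simp [hX, conjTranspose_apply, Prod.ext_iff, Matrix.conjTranspose, Matrix.transpose, Matrix.map]
  · intro x
    set s := Real.sqrt (μ 0 * μ 1) with hs
    have hs2 : μ 2 ≤ s := by
      refine h21.trans ?_
      rw [hs]
      calc μ 1 = Real.sqrt (μ 1 * μ 1) := by rw [Real.sqrt_mul_self h2]
        _ ≤ Real.sqrt (μ 0 * μ 1) := Real.sqrt_le_sqrt (by nlinarith)
    set a := x 0 with ha
    set b := x 1 with hb
    have key : star x ⬝ᵥ X.mulVec x =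
        ((μ 0 * Complex.normSq a + μ 1 * Complex.normSq b
          + 2 * μ 2 * (a.re * b.re + a.im * b.im) : ℝ) : ℂ) := by
      simp [hX, mulVec, dotProduct, Fintype.sum_prod_type, Fin.sum_univ_two,
        Complex.normSq_apply, Complex.ext_iff, Complex.mul_re, Complex.mul_im, ← (ha : a = x (0, 0)), ← (hb : b = x (1, 1))]
      rw [show x (0, 0) = a from rfl, show x (1, 1) = b from rfl]
      constructor <;> ring
    rw [key]
    rw [Complex.le_def]
    simp only [Complex.zero_re, Complex.zero_im, Complex.ofReal_re, Complex.ofReal_im,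
      eq_self_iff_true, and_true]
    have habs : |a.re * b.re + a.im * b.im| ≤ ‖a‖ * ‖b‖ := by
      have := Complex.abs_re_le_norm (starRingEnd ℂ a * b)
      simpa [Complex.mul_re, _root_.map_mul] using this
    have hss : Real.sqrt (μ 0) * Real.sqrt (μ 1) = s := (Real.sqrt_mul h0 _).symm
    have h1 : Complex.normSq a = (‖a‖) ^ 2 := (Complex.sq_norm a).symm
    have h2' : Complex.normSq b = (‖b‖) ^ 2 := (Complex.sq_norm b).symm
    rw [h1, h2']
    nlinarith [sq_nonneg (Real.sqrt (μ 0) * ‖a‖ - Real.sqrt (μ 1) * ‖b‖),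
      Real.sq_sqrt h0, Real.sq_sqrt h2, abs_nonneg (a.re * b.re + a.im * b.im),
      abs_le.mp habs, norm_nonneg a, norm_nonneg b,
      mul_nonneg (norm_nonneg a) (norm_nonneg b), hss, hs2, h3]
  all_goals
    funext p
    obtain ⟨i, j⟩ := p
    fin_cases i <;> fin_cases j <;>
      simp [hW, hX, symProj, ptrans, eTens, mulVec, mul_apply, dotProduct,
        Fintype.sum_prod_type, Fin.sum_univ_two, Prod.ext_iff, Pi.add_apply,
        Pi.sub_apply, Pi.smul_apply, smul_eq_mul] <;> ring
end

section
/- Let W be a Hermitian operator on the symmetric subspace of C^2 ⊗ C^2 with eigenvalues μ_1 ≥ μ_2 ≥ μ_3, and suppose Tr(Wρ) ≥ 0 for every symmetric quantum state ρ whose eigenvalues λ_1 ≥ λ_2 ≥ λ_3 ≥ 0 satisfy λ_1 ≤ 2√(λ_2 λ_3). Then μ_3 ≥ −μ_1/4 − μ_2 if μ_2 < μ_1/4, and μ_3 ≥ −√(μ_1 μ_2) if μ_2 ≥ μ_1/4. -/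
open Matrix ComplexOrder

open Polynomial in
lemma charpoly_conj_aux {n : Type*} [Fintype n] [DecidableEq n]
    (U V A : Matrix n n ℂ) (hUV : U * V = 1) :
    (U * A * V).charpoly = A.charpoly := by
  have hmapUV : U.map C * V.map C = 1 := by
    rw [← Matrix.map_mul, hUV, Matrix.map_one _ (map_zero C) (map_one C)]
  have h1 : charmatrix (U * A * V) = (U.map C) * charmatrix A * (V.map C) := by
    unfold charmatrix
    rw [Matrix.mul_sub, Matrix.sub_mul]
    congr 1
    · rw [mul_assoc, (Matrix.scalar_commute (X : ℂ[X])
        (fun r => Commute.all _ _) (V.map C)).eq, ← mul_assoc, hmapUV, one_mul]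
    · simp only [RingHom.mapMatrix_apply]
      rw [← Matrix.map_mul, ← Matrix.map_mul]
  unfold Matrix.charpoly
  rw [h1, det_mul, det_mul, mul_comm, ← mul_assoc, mul_comm (V.map C).det, ← det_mul, hmapUV,
    det_one, one_mul]

open Polynomial in
lemma charpoly_diag {n : Type*} [Fintype n] [DecidableEq n] [LinearOrder n] (f : n → ℂ) :
    (diagonal f).charpoly = ∏ i, (X - C (f i)) := by
  rw [Matrix.charpoly_of_upperTriangular _ (Matrix.blockTriangular_diagonal f)]
  simp [diagonal_apply_eq]

open Polynomial in
lemma myRootsProd {n : Type*} [Fintype n] [DecidableEq n] (g : n → ℂ) :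
    (∏ i, (X - C (g i))).roots = Finset.univ.val.map g := by
  rw [Finset.prod_eq_multiset_prod,
    show (fun i => X - C (g i)) = ((fun a => X - C a) ∘ g) from rfl,
    ← Multiset.map_map, roots_multiset_prod_X_sub_C]

open Polynomial in
lemma eig_multiset {B : Matrix (Fin 3) (Fin 3) ℂ} (hB : B.IsHermitian) (d : Fin 3 → ℝ)
    (U : Matrix (Fin 3) (Fin 3) ℂ) (hU1 : U * star U = 1)
    (hBU : B = U * diagonal (fun i => (d i : ℂ)) * star U) :
    Finset.univ.val.map hB.eigenvalues = Finset.univ.val.map d := by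
  have h1 : B.charpoly = ∏ i, (X - C ((d i : ℂ))) := by
    rw [hBU, charpoly_conj_aux _ _ _ hU1, charpoly_diag]
  have h2 : B.charpoly = ∏ i, (X - C ((hB.eigenvalues i : ℂ))) := by
    conv_lhs => rw [hB.spectral_theorem, Unitary.conjStarAlgAut_apply]
    rw [charpoly_conj_aux _ _ _
      ((Matrix.mem_unitaryGroup_iff).mp hB.eigenvectorUnitary.2), charpoly_diag]
    rfl
  have h3 : Finset.univ.val.map (fun i => ((hB.eigenvalues i : ℝ) : ℂ))
      = Finset.univ.val.map (fun i => ((d i : ℝ) : ℂ)) := by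
    rw [← myRootsProd, ← myRootsProd, ← h1, ← h2]
  have h4 := congrArg (Multiset.map Complex.re) h3
  simpa [Multiset.map_map, Function.comp] using h4

lemma perm_multiset {α : Type*} (f : Fin 3 → α) (σ : Equiv.Perm (Fin 3)) :
    Finset.univ.val.map (fun i => f (σ i)) = Finset.univ.val.map f := by
  have h : Finset.univ.val.map (⇑σ) = Finset.univ.val := by
    have := congrArg Finset.val (Finset.map_univ_equiv σ)
    simpa [Finset.map_val] using this
  conv_rhs => rw [← h, Multiset.map_map]
  rfl

lemma sorted_unique (f g : Fin 3 → ℝ)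
    (hf : ∀ i j : Fin 3, i ≤ j → f j ≤ f i) (hg : ∀ i j : Fin 3, i ≤ j → g j ≤ g i)
    (h : Finset.univ.val.map f = Finset.univ.val.map g) : ∀ i, f i = g i := by
  have huniv : (Finset.univ.val : Multiset (Fin 3)) = ↑[(0 : Fin 3), 1, 2] := by decide
  rw [huniv] at h
  simp only [Multiset.map_coe] at h
  have hp : List.Perm [f 0, f 1, f 2] [g 0, g 1, g 2] := Multiset.coe_eq_coe.mp h
  haveI : IsAntisymm ℝ (· ≥ ·) := ⟨fun a b h1 h2 => le_antisymm h2 h1⟩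
  have sorted3 : ∀ u : Fin 3 → ℝ, (∀ i j : Fin 3, i ≤ j → u j ≤ u i) →
      List.Pairwise (· ≥ ·) [u 0, u 1, u 2] := by
    intro u hu
    have h01 := hu 0 1 (by decide)
    have h02 := hu 0 2 (by decide)
    have h12 := hu 1 2 (by decide)
    simp only [List.pairwise_cons, List.mem_cons]
    refine ⟨fun b hb => ?_, fun b hb => ?_, by simp⟩ <;> simp at hb <;>
      rcases hb with h | h <;> simp [h, ge_iff_le] <;> linarith
  have heq : [f 0, f 1, f 2] = [g 0, g 1, g 2] :=
    List.Perm.eq_of_pairwise (fun a b _ _ h1 h2 => le_antisymm h2 h1) (sorted3 f hf) (sorted3 g hg) hp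
  intro i
  fin_cases i <;> simp_all

lemma fin3_tri : ∀ k : Fin 3, k = 0 ∨ k = 1 ∨ k = 2 := by decide

lemma mksort (f : Fin 3 → ℝ) (h01 : f 1 ≤ f 0) (h12 : f 2 ≤ f 1) :
    ∀ i j : Fin 3, i ≤ j → f j ≤ f i := by
  intro i j hij
  rcases fin3_tri i with rfl | rfl | rfl <;> rcases fin3_tri j with rfl | rfl | rfl <;>
    first
      | linarith
      | exact absurd hij (by decide)

lemma key (W : Matrix (Fin 3) (Fin 3) ℂ) (hW : W.IsHermitian)
    (μ : Fin 3 → ℝ)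
    (hμ : ∃ σ : Equiv.Perm (Fin 3), ∀ i, hW.eigenvalues i = μ (σ i))
    (hpos : ∀ (ρ : Matrix (Fin 3) (Fin 3) ℂ) (hρ : ρ.PosSemidef), ρ.trace = 1 →
      (∀ lam : Fin 3 → ℝ, (∀ i j : Fin 3, i ≤ j → lam j ≤ lam i) →
        (∃ σ : Equiv.Perm (Fin 3), ∀ i, hρ.1.eigenvalues i = lam (σ i)) →
        lam 0 ≤ 2 * Real.sqrt (lam 1 * lam 2)) →
      0 ≤ ((W * ρ).trace).re) :
    ∀ lam : Fin 3 → ℝ, (∀ i j : Fin 3, i ≤ j → lam j ≤ lam i) → (∀ i, 0 ≤ lam i) →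
      lam 0 + lam 1 + lam 2 = 1 → lam 0 ≤ 2 * Real.sqrt (lam 1 * lam 2) →
      0 ≤ μ 0 * lam 2 + μ 1 * lam 1 + μ 2 * lam 0 := by
  obtain ⟨σ, hσ⟩ := hμ
  intro lam hsort hnn hsum hcon
  set U := (hW.eigenvectorUnitary : Matrix (Fin 3) (Fin 3) ℂ) with hUdef
  have hU1 : U * star U = 1 := (Matrix.mem_unitaryGroup_iff).mp hW.eigenvectorUnitary.2
  have hU2 : star U * U = 1 := (Matrix.mem_unitaryGroup_iff').mp hW.eigenvectorUnitary.2
  set τ : Equiv.Perm (Fin 3) := σ.trans Fin.revPerm with hτdef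
  set d : Fin 3 → ℝ := fun i => lam (τ i) with hddef
  set ρ : Matrix (Fin 3) (Fin 3) ℂ := U * Matrix.diagonal (fun i => (d i : ℂ)) * star U with hρdef
  have hρpsd : ρ.PosSemidef := by
    apply Matrix.PosSemidef.mul_mul_conjTranspose_same
    exact Matrix.posSemidef_diagonal_iff.mpr (fun i => by simpa using hnn (τ i))
  have htr : ρ.trace = 1 := by
    rw [hρdef, Matrix.trace_mul_cycle, hU2, Matrix.one_mul, Matrix.trace_diagonal]
    have h1 : ∑ i, ((d i : ℂ)) = ((∑ i, d i : ℝ) : ℂ) := by push_cast; rfl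
    have hsd : ∑ i, d i = 1 := by
      have h2 : ∑ i, d i = ∑ i, lam i := Equiv.sum_comp τ lam
      rw [h2, Fin.sum_univ_three]; linarith
    rw [h1, hsd]; norm_num
  have hinner : ∀ lam'' : Fin 3 → ℝ, (∀ i j : Fin 3, i ≤ j → lam'' j ≤ lam'' i) →
      (∃ σ'' : Equiv.Perm (Fin 3), ∀ i, hρpsd.1.eigenvalues i = lam'' (σ'' i)) →
      lam'' 0 ≤ 2 * Real.sqrt (lam'' 1 * lam'' 2) := by
    intro lam'' hsort'' ⟨σ'', hσ''⟩
    have hm : Finset.univ.val.map hρpsd.1.eigenvalues = Finset.univ.val.map d :=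
      eig_multiset hρpsd.1 d U hU1 hρdef
    have hmd : Finset.univ.val.map d = Finset.univ.val.map lam := perm_multiset lam τ
    have hm2 : Finset.univ.val.map hρpsd.1.eigenvalues
        = Finset.univ.val.map (fun i => lam'' (σ'' i)) := by
      congr 1; funext i; exact hσ'' i
    have hml : Finset.univ.val.map lam'' = Finset.univ.val.map lam := by
      rw [← perm_multiset lam'' σ'', ← hm2, hm, hmd]
    have heq := sorted_unique lam'' lam hsort'' hsort hml
    rw [heq 0, heq 1, heq 2]; exact hcon
  have h0 := hpos ρ hρpsd htr hinner
  have hE : Matrix.diagonal (RCLike.ofReal ∘ hW.eigenvalues)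
      = Matrix.diagonal (fun i => ((μ (σ i) : ℝ) : ℂ)) := by
    have hfun : RCLike.ofReal ∘ hW.eigenvalues = fun i => ((μ (σ i) : ℝ) : ℂ) := by
      funext i
      show RCLike.ofReal (hW.eigenvalues i) = _
      rw [hσ i]; rfl
    rw [hfun]
  have hWρ : W * ρ = U * (Matrix.diagonal (fun i => ((μ (σ i) : ℂ) * (d i : ℂ)))) * star U := by
    conv_lhs => rw [hρdef, hW.spectral_theorem, Unitary.conjStarAlgAut_apply, hE]
    have haux : star U * (U * (Matrix.diagonal (fun i => (d i : ℂ)) * star U))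
        = Matrix.diagonal (fun i => (d i : ℂ)) * star U := by
      rw [← Matrix.mul_assoc, hU2, Matrix.one_mul]
    simp only [Matrix.mul_assoc]
    rw [haux, show Matrix.diagonal (fun i => ((μ (σ i) : ℂ)))
        * (Matrix.diagonal (fun i => (d i : ℂ)) * star U)
      = Matrix.diagonal (fun i => ((μ (σ i) : ℂ))) * Matrix.diagonal (fun i => (d i : ℂ))
        * star U from (Matrix.mul_assoc _ _ _).symm, Matrix.diagonal_mul_diagonal]
  have htr2 : ((W * ρ).trace).re = ∑ i, μ (σ i) * d i := by
    rw [hWρ, Matrix.trace_mul_cycle, hU2, Matrix.one_mul, Matrix.trace_diagonal]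
    have h1 : ∑ i, ((μ (σ i) : ℂ) * (d i : ℂ)) = ((∑ i, μ (σ i) * d i : ℝ) : ℂ) := by
      push_cast; rfl
    rw [h1, Complex.ofReal_re]
  rw [htr2] at h0
  have hsum2 : ∑ i, μ (σ i) * d i = μ 0 * lam 2 + μ 1 * lam 1 + μ 2 * lam 0 := by
    have hterm : ∀ i, μ (σ i) * d i = (fun j => μ j * lam (Fin.rev j)) (σ i) := fun i => rfl
    rw [Finset.sum_congr rfl (fun i _ => hterm i),
      Equiv.sum_comp σ (fun j => μ j * lam (Fin.rev j)), Fin.sum_univ_three,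
      show Fin.rev (0 : Fin 3) = 2 from by decide,
      show Fin.rev (1 : Fin 3) = 1 from by decide,
      show Fin.rev (2 : Fin 3) = 0 from by decide]
  rw [hsum2] at h0
  exact h0

theorem stmt13 (W : Matrix (Fin 3) (Fin 3) ℂ) (hW : W.IsHermitian)
    (μ : Fin 3 → ℝ) (hμsort : ∀ i j : Fin 3, i ≤ j → μ j ≤ μ i)
    (hμ : ∃ σ : Equiv.Perm (Fin 3), ∀ i, hW.eigenvalues i = μ (σ i))
    (hpos : ∀ (ρ : Matrix (Fin 3) (Fin 3) ℂ) (hρ : ρ.PosSemidef), ρ.trace = 1 →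
      (∀ lam : Fin 3 → ℝ, (∀ i j : Fin 3, i ≤ j → lam j ≤ lam i) →
        (∃ σ : Equiv.Perm (Fin 3), ∀ i, hρ.1.eigenvalues i = lam (σ i)) →
        lam 0 ≤ 2 * Real.sqrt (lam 1 * lam 2)) →
      0 ≤ ((W * ρ).trace).re) :
    (μ 1 < μ 0 / 4 → -(μ 0 / 4) - μ 1 ≤ μ 2) ∧
    (μ 0 / 4 ≤ μ 1 → -Real.sqrt (μ 0 * μ 1) ≤ μ 2) := by
  have hkey := key W hW μ hμ hpos
  have hμ01 := hμsort 0 1 (by decide)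
  have hμ12 := hμsort 1 2 (by decide)
  -- Instance A: (4/9, 4/9, 1/9)
  have c1 : (0:ℝ) ≤ μ 0 * (1/9) + μ 1 * (4/9) + μ 2 * (4/9) := by
    have h := hkey ![4/9, 4/9, 1/9]
      (mksort _ (by norm_num) (by show (1:ℝ)/9 ≤ 4/9; norm_num))
      (fun i => by fin_cases i <;> norm_num)
      (by show (4:ℝ)/9 + 4/9 + 1/9 = 1; norm_num)
      (by
        show (4:ℝ)/9 ≤ 2 * Real.sqrt ((4:ℝ)/9 * (1/9))
        rw [show (4:ℝ)/9 * (1/9) = (2/9)^2 by norm_num, Real.sqrt_sq (by norm_num)]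
        norm_num)
    simpa using h
  constructor
  · intro _
    linarith
  · intro h14
    rcases le_or_gt 0 (μ 2) with hpos2 | hneg
    · exact le_trans (neg_nonpos.mpr (Real.sqrt_nonneg _)) hpos2
    -- Instance B: (1/2, 1/4, 1/4)
    have c2 : (0:ℝ) ≤ μ 0 * (1/4) + μ 1 * (1/4) + μ 2 * (1/2) := by
      have h := hkey ![1/2, 1/4, 1/4]
        (mksort _ (by norm_num) (by show (1:ℝ)/4 ≤ 1/4; norm_num))
        (fun i => by fin_cases i <;> norm_num)
        (by show (1:ℝ)/2 + 1/4 + 1/4 = 1; norm_num)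
        (by
          show (1:ℝ)/2 ≤ 2 * Real.sqrt ((1:ℝ)/4 * (1/4))
          rw [show (1:ℝ)/4 * (1/4) = (1/4)^2 by norm_num, Real.sqrt_sq (by norm_num)]
          norm_num)
      simpa using h
    have hμ0pos : 0 < μ 0 := by linarith
    have hμ1pos : 0 < μ 1 := by linarith
    have hle : -μ 2 ≤ μ 0 := by linarith
    rcases lt_or_ge (-μ 2) (μ 0 / 2) with hsmall | hbig
    · have hsq : μ 0 / 2 ≤ Real.sqrt (μ 0 * μ 1) :=
        (Real.le_sqrt' (by linarith)).mpr (by nlinarith)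
      linarith
    · set s : ℝ := -μ 2 / μ 0 with hsdef
      have hshalf : 1/2 ≤ s := by
        rw [hsdef, le_div_iff₀ hμ0pos]; linarith
      have hs1 : s ≤ 1 := (div_le_one hμ0pos).mpr hle
      have hs0 : 0 < s := by linarith
      have hs1ne : (1 + s) ≠ 0 := by positivity
      have hden : (0:ℝ) < (1+s)^2 := by positivity
      have c3 : (0:ℝ) ≤ μ 0 * (s^2/(1+s)^2) + μ 1 * (1/(1+s)^2) + μ 2 * (2*s/(1+s)^2) := by
        have h := hkey ![2*s/(1+s)^2, 1/(1+s)^2, s^2/(1+s)^2]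
          (mksort _ ((div_le_div_iff_of_pos_right hden).mpr (by linarith))
            ((div_le_div_iff_of_pos_right hden).mpr (by nlinarith)))
          (fun i => by
            rcases fin3_tri i with rfl | rfl | rfl
            · show (0:ℝ) ≤ 2*s/(1+s)^2; positivity
            · show (0:ℝ) ≤ 1/(1+s)^2; positivity
            · show (0:ℝ) ≤ s^2/(1+s)^2; positivity)
          (by
            show 2*s/(1+s)^2 + 1/(1+s)^2 + s^2/(1+s)^2 = 1
            field_simp; ring)
          (by
            show 2*s/(1+s)^2 ≤ 2 * Real.sqrt (1/(1+s)^2 * (s^2/(1+s)^2))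
            rw [show 1/(1+s)^2 * (s^2/(1+s)^2) = (s/(1+s)^2)^2 by field_simp,
              Real.sqrt_sq (by positivity)]
            rw [mul_div_assoc])
        simpa using h
      have hx : μ 0 * (s^2/(1+s)^2) + μ 1 * (1/(1+s)^2) + μ 2 * (2*s/(1+s)^2)
          = (μ 0 * s^2 + μ 1 + μ 2 * (2*s))/(1+s)^2 := by
        field_simp
        try ring
      rw [hx] at c3
      have c4 : (0:ℝ) ≤ μ 0 * s^2 + μ 1 + μ 2 * (2*s) := by
        rcases div_nonneg_iff.mp c3 with ⟨h1, _⟩ | ⟨_, h2⟩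
        · exact h1
        · nlinarith
      have hμ0s : μ 0 * s = -μ 2 := by
        rw [hsdef]; field_simp; try ring
      have hcalc : (μ 0 * s ^ 2 + μ 1 + μ 2 * (2 * s)) * μ 0
          = μ 0 * μ 1 - μ 2 ^ 2 := by
        calc (μ 0 * s ^ 2 + μ 1 + μ 2 * (2 * s)) * μ 0
            = (μ 0 * s) ^ 2 + μ 0 * μ 1 + 2 * μ 2 * (μ 0 * s) := by ring
          _ = μ 0 * μ 1 - μ 2 ^ 2 := by rw [hμ0s]; ring
      have c5 : μ 2 ^ 2 ≤ μ 0 * μ 1 := by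
        have h2 := mul_nonneg c4 hμ0pos.le
        rw [hcalc] at h2
        linarith
      nlinarith [Real.sq_sqrt (show (0:ℝ) ≤ μ 0 * μ 1 by positivity),
        Real.sqrt_nonneg (μ 0 * μ 1), sq_nonneg (Real.sqrt (μ 0 * μ 1) + μ 2)]
end

section
/- For every integer d ≥ 1, there exists a positive semidefinite matrix X on C^d ⊗ C^d such that P X^Γ P has exactly d(d−1)/2 strictly negative eigenvalues, where P is the orthogonal projection onto the symmetric subspace and Γ is the partial transpose. -/
open Matrix ComplexOrder

namespace Stmt18

variable {d : ℕ}

/-- The swap (flip) matrix. -/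
noncomputable def S (d : ℕ) : Matrix (Fin d × Fin d) (Fin d × Fin d) ℂ :=
  fun p q => if q = (p.2, p.1) then 1 else 0

noncomputable def fC (d : ℕ) : Fin d × Fin d → ℂ :=
  fun p => if p.1 = p.2 then (d : ℂ) - 1 else -1

def fR (d : ℕ) : Fin d × Fin d → ℝ :=
  fun p => if p.1 = p.2 then (d : ℝ) - 1 else -1

/-- Our PSD witness matrix. -/
noncomputable def X (d : ℕ) : Matrix (Fin d × Fin d) (Fin d × Fin d) ℂ :=
  fun p q => if p.1 = p.2 ∧ q.1 = q.2 then (if p.1 = q.1 then (d : ℂ) - 1 else -1) else 0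

noncomputable def D (d : ℕ) : Matrix (Fin d × Fin d) (Fin d × Fin d) ℂ :=
  Matrix.diagonal (fC d)

lemma swap_eq_swap_iff (p q : Fin d × Fin d) : q = (p.2, p.1) ↔ p = (q.2, q.1) := by
  constructor <;> rintro rfl <;> simp

lemma fC_swap (p : Fin d × Fin d) : fC d (p.2, p.1) = fC d p := by
  simp only [fC]
  by_cases h : p.1 = p.2 <;> simp [h, eq_comm]

lemma fC_eq_real (p : Fin d × Fin d) : fC d p = ((fR d p : ℝ) : ℂ) := by
  simp only [fC, fR]
  by_cases h : p.1 = p.2 <;> simp [h]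

lemma symProj_eq : symProj d = (2⁻¹ : ℂ) • (1 + S d) := by
  ext p q
  simp only [symProj, S, Matrix.smul_apply, Matrix.add_apply, Matrix.one_apply, Prod.ext_iff,
    smul_eq_mul]
  have h : (q.1 = p.2 ∧ q.2 = p.1) ↔ (p.1 = q.2 ∧ p.2 = q.1) := by
    constructor <;> exact fun h => ⟨h.2.symm, h.1.symm⟩
  rw [if_congr h rfl rfl]
  split_ifs <;> ring

lemma S_mul_S : S d * S d = 1 := by
  ext p q
  rw [Matrix.mul_apply]
  rw [Finset.sum_eq_single (p.2, p.1)]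
  · simp [S, Matrix.one_apply, swap_eq_swap_iff, eq_comm]
  · intro r _ hr
    simp only [S]
    rw [if_neg hr, zero_mul]
  · simp

lemma ptrans_X : ptrans (X d) = D d * S d := by
  ext p q
  rw [D, Matrix.diagonal_mul]
  simp only [ptrans, X, S, fC]
  by_cases hq : q = (p.2, p.1)
  · subst hq
    simp
  · have h1 : ¬(p.1 = q.2 ∧ q.1 = p.2) := fun h => hq (Prod.ext h.2 h.1.symm)
    rw [if_neg h1, if_neg hq, mul_zero]

lemma S_mul_D : S d * D d = D d * S d := by
  ext p q
  rw [D, Matrix.mul_diagonal, Matrix.diagonal_mul]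
  by_cases hq : q = (p.2, p.1)
  · subst hq
    rw [fC_swap]
    ring
  · simp only [S, if_neg hq, zero_mul, mul_zero]

lemma core : (1 + S d) * (D d * S d) * (1 + S d) = (2 : ℂ) • (D d * (1 + S d)) := by
  have h1 : S d * (D d * S d) = D d := by
    rw [← mul_assoc, S_mul_D, mul_assoc, S_mul_S, mul_one]
  have h2 : D d * S d * S d = D d := by
    rw [mul_assoc, S_mul_S, mul_one]
  rw [add_mul, one_mul, h1, mul_add, mul_one, add_mul, h2, mul_add, mul_one, two_smul]
  abel

lemma M_eq : symProj d * ptrans (X d) * symProj d = D d * symProj d := by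
  rw [symProj_eq, ptrans_X, smul_mul_assoc, smul_mul_assoc, mul_smul_comm, core,
    mul_smul_comm, smul_smul, smul_smul]
  norm_num

lemma P_mul_P : symProj d * symProj d = symProj d := by
  rw [symProj_eq, smul_mul_assoc, mul_smul_comm, smul_smul]
  rw [mul_add, add_mul, add_mul, one_mul, mul_one, S_mul_S, one_mul]
  rw [show (1 : Matrix (Fin d × Fin d) (Fin d × Fin d) ℂ) + S d + (S d + 1)
      = (2:ℂ) • (1 + S d) from by rw [two_smul]; abel]
  rw [smul_smul]
  norm_num

lemma P_mul_D : symProj d * D d = D d * symProj d := by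
  rw [symProj_eq, smul_mul_assoc, mul_smul_comm, add_mul, one_mul, S_mul_D, mul_add, mul_one]

lemma MM_eq : (D d * symProj d) * (D d * symProj d) = (D d * D d) * symProj d := by
  calc (D d * symProj d) * (D d * symProj d) = D d * (symProj d * (D d * symProj d)) := by
        rw [mul_assoc]
    _ = D d * ((symProj d * D d) * symProj d) := by
        rw [← mul_assoc (symProj d) (D d) (symProj d)]
    _ = D d * ((D d * symProj d) * symProj d) := by rw [P_mul_D]
    _ = D d * (D d * (symProj d * symProj d)) := by rw [mul_assoc]
    _ = (D d * D d) * symProj d := by rw [P_mul_P, ← mul_assoc]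

lemma symProj_herm : (symProj d).IsHermitian := by
  ext p q
  simp only [conjTranspose_apply, symProj]
  have h1 : (q.1 = p.1 ∧ q.2 = p.2) ↔ (p.1 = q.1 ∧ p.2 = q.2) := by
    constructor <;> exact fun h => ⟨h.1.symm, h.2.symm⟩
  have h2 : (q.1 = p.2 ∧ q.2 = p.1) ↔ (p.1 = q.2 ∧ p.2 = q.1) := by
    constructor <;> exact fun h => ⟨h.2.symm, h.1.symm⟩
  rw [if_congr h1 rfl rfl, if_congr h2 rfl rfl]
  split_ifs <;> norm_num

lemma D_herm : (D d).IsHermitian := by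
  rw [Matrix.IsHermitian, D, Matrix.diagonal_conjTranspose]
  have : star (fC d) = fC d := funext fun p => by
    rw [Pi.star_apply, fC_eq_real, RCLike.star_def, Complex.conj_ofReal]
  rw [this]

lemma M_herm : (D d * symProj d).IsHermitian := by
  rw [Matrix.IsHermitian, conjTranspose_mul, symProj_herm.eq, D_herm.eq, P_mul_D]

lemma sum_diag_ite (c : ℂ) : ∑ p : Fin d × Fin d, (if p.1 = p.2 then c else 0) = d * c := by
  rw [Fintype.sum_prod_type]
  simp [Finset.sum_ite_eq]

lemma M_diag (p : Fin d × Fin d) :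
    (D d * symProj d) p p = -1/2 + (if p.1 = p.2 then (d : ℂ) - 1/2 else 0) := by
  rw [D, Matrix.diagonal_mul]
  simp only [fC, symProj]
  by_cases h : p.1 = p.2 <;> simp [h, eq_comm] <;> ring

lemma MM_diag (p : Fin d × Fin d) :
    ((D d * D d) * symProj d) p p = 1/2 + (if p.1 = p.2 then ((d : ℂ) - 1)^2 - 1/2 else 0) := by
  rw [D, Matrix.diagonal_mul_diagonal, Matrix.diagonal_mul]
  simp only [fC, symProj]
  by_cases h : p.1 = p.2 <;> simp [h, eq_comm] <;> ring

lemma trace_M : (D d * symProj d).trace = ((d : ℂ) * d - d) / 2 := by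
  rw [Matrix.trace]
  simp only [Matrix.diag, M_diag]
  rw [Finset.sum_add_distrib, sum_diag_ite, Finset.sum_const, Finset.card_univ]
  simp only [Fintype.card_prod, Fintype.card_fin, nsmul_eq_mul]
  push_cast
  ring

lemma trace_MM : ((D d * D d) * symProj d).trace = (d : ℂ) * ((d : ℂ) - 1)^2 + ((d : ℂ) * d - d) / 2 := by
  rw [Matrix.trace]
  simp only [Matrix.diag, MM_diag]
  rw [Finset.sum_add_distrib, sum_diag_ite, Finset.sum_const, Finset.card_univ]
  simp only [Fintype.card_prod, Fintype.card_fin, nsmul_eq_mul]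
  push_cast
  ring


lemma sum_diag (g : Fin d × Fin d → ℂ) :
    ∑ p : Fin d × Fin d, (if p.1 = p.2 then g p else 0) = ∑ i : Fin d, g (i, i) := by
  rw [Fintype.sum_prod_type]
  simp [Finset.sum_ite_eq]

lemma X_herm : (X d).IsHermitian := by
  ext p q
  simp only [conjTranspose_apply, X]
  have h1 : (q.1 = q.2 ∧ p.1 = p.2) ↔ (p.1 = p.2 ∧ q.1 = q.2) := and_comm
  rw [if_congr h1 rfl rfl]
  by_cases h : p.1 = p.2 ∧ q.1 = q.2
  · rw [if_pos h, if_pos h]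
    have h2 : (q.1 = p.1) ↔ (p.1 = q.1) := eq_comm
    rw [if_congr h2 rfl rfl]
    split_ifs <;> simp [Complex.ext_iff]
  · simp [h]

lemma X_psd : (X d).PosSemidef := by
  refine PosSemidef.of_dotProduct_mulVec_nonneg X_herm fun x => ?_
  set t : Fin d → ℂ := fun i => x (i, i) with ht
  have hx : ∀ i : Fin d, x (i, i) = t i := fun i => rfl
  have inner : ∀ p : Fin d × Fin d, (∑ q, X d p q * x q)
      = if p.1 = p.2 then (d : ℂ) * x p - (∑ i, t i) else 0 := by
    rintro ⟨a, b⟩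
    by_cases hp : a = b
    · subst hp
      simp only [X, true_and, if_pos rfl, ite_mul, zero_mul, if_true]
      rw [sum_diag (fun q => if a = q.1 then ((d : ℂ) - 1) * x q else -1 * x q)]
      have e2 : ∀ i : Fin d, (if a = (i, i).1 then ((d : ℂ) - 1) * x (i, i) else -1 * x (i, i))
          = (if a = i then (d : ℂ) * t i else 0) + (-1) * t i := by
        intro i; by_cases hi : a = i
        · subst hi; rw [if_pos rfl, if_pos rfl]; simp only [hx]; ring
        · simp [hi, hx]
      rw [Finset.sum_congr rfl fun i _ => e2 i, Finset.sum_add_distrib, Finset.sum_ite_eq]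
      simp [hx]
      ring
    · simp [X, hp]
  have key : star x ⬝ᵥ (X d *ᵥ x)
      = (d : ℂ) * (∑ i, (starRingEnd ℂ) (t i) * t i)
        - (starRingEnd ℂ) (∑ i, t i) * (∑ i, t i) := by
    simp only [dotProduct, mulVec, dotProduct, Pi.star_apply, RCLike.star_def]
    rw [Finset.sum_congr rfl fun p _ => by rw [inner p]]
    have this2 : ∀ p : Fin d × Fin d, (starRingEnd ℂ) (x p) *
        (if p.1 = p.2 then (d : ℂ) * x p - (∑ i, t i) else 0)
        = if p.1 = p.2 then (starRingEnd ℂ) (x p) * ((d : ℂ) * x p - (∑ i, t i)) else 0 := by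
      intro p; split_ifs <;> simp
    rw [Finset.sum_congr rfl fun p _ => this2 p, sum_diag]
    simp only [hx, map_sum, mul_sub, Finset.sum_sub_distrib]
    congr 1
    · rw [Finset.mul_sum]
      exact Finset.sum_congr rfl fun i _ => by ring
    · rw [Finset.sum_mul]
  rw [key]
  have hreal : (d : ℂ) * (∑ i, (starRingEnd ℂ) (t i) * t i)
        - (starRingEnd ℂ) (∑ i, t i) * (∑ i, t i)
      = (((d : ℝ) * (∑ i, Complex.normSq (t i)) - Complex.normSq (∑ i, t i) : ℝ) : ℂ) := by
    simp only [← Complex.normSq_eq_conj_mul_self]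
    push_cast
    ring
  rw [hreal, Complex.zero_le_real]
  have h2 : ‖∑ i, t i‖ ≤ ∑ i, ‖t i‖ := norm_sum_le _ _
  have h3 : ‖∑ i, t i‖ ^ 2 ≤ (∑ i, ‖t i‖) ^ 2 :=
    pow_le_pow_left₀ (norm_nonneg _) h2 2
  have h4 : (∑ i : Fin d, ‖t i‖) ^ 2 ≤ (d : ℝ) * ∑ i, ‖t i‖ ^ 2 := by
    have := sq_sum_le_card_mul_sum_sq (s := (Finset.univ : Finset (Fin d))) (f := fun i => ‖t i‖)
    simpa using this
  have h5 : ∀ z : ℂ, Complex.normSq z = ‖z‖ ^ 2 := fun z => by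
    rw [Complex.normSq_eq_norm_sq]
  simp only [h5]
  linarith

section Generic
variable {n : Type*} [Fintype n] [DecidableEq n] {A : Matrix n n ℂ}

lemma trace_eq_sum_eig (h : A.IsHermitian) :
    A.trace = ∑ i, ((h.eigenvalues i : ℝ) : ℂ) := by
  have hU : (h.eigenvectorUnitary : Matrix n n ℂ) * star (h.eigenvectorUnitary : Matrix n n ℂ)
      = 1 := mem_unitaryGroup_iff.mp h.eigenvectorUnitary.2
  calc A.trace = (A * ((h.eigenvectorUnitary : Matrix n n ℂ)
        * star (h.eigenvectorUnitary : Matrix n n ℂ))).trace := by rw [hU, mul_one]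
    _ = (star (h.eigenvectorUnitary : Matrix n n ℂ) * A
        * (h.eigenvectorUnitary : Matrix n n ℂ)).trace := by
        rw [← mul_assoc, trace_mul_comm, ← mul_assoc]
    _ = ∑ i, ((h.eigenvalues i : ℝ) : ℂ) := by
        rw [(by have e := h.conjStarAlgAut_star_eigenvectorUnitary; rwa [Unitary.conjStarAlgAut_star_apply] at e :
          star (h.eigenvectorUnitary : Matrix n n ℂ) * A * (h.eigenvectorUnitary : Matrix n n ℂ)
            = diagonal (RCLike.ofReal ∘ h.eigenvalues)), trace_diagonal]
        simp

lemma conj_sq_eq_diag_sq (h : A.IsHermitian) :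
    star (h.eigenvectorUnitary : Matrix n n ℂ) * (A * A) * (h.eigenvectorUnitary : Matrix n n ℂ)
      = diagonal (fun i => (((h.eigenvalues i : ℝ) : ℂ))^2) := by
  have hU : (h.eigenvectorUnitary : Matrix n n ℂ) * star (h.eigenvectorUnitary : Matrix n n ℂ)
      = 1 := mem_unitaryGroup_iff.mp h.eigenvectorUnitary.2
  have e : star (h.eigenvectorUnitary : Matrix n n ℂ) * A * (h.eigenvectorUnitary : Matrix n n ℂ)
      = diagonal (RCLike.ofReal ∘ h.eigenvalues) := by
    have e := h.conjStarAlgAut_star_eigenvectorUnitary; rwa [Unitary.conjStarAlgAut_star_apply] at e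
  have key : (star (h.eigenvectorUnitary : Matrix n n ℂ) * A
        * (h.eigenvectorUnitary : Matrix n n ℂ))
      * (star (h.eigenvectorUnitary : Matrix n n ℂ) * A
        * (h.eigenvectorUnitary : Matrix n n ℂ))
      = star (h.eigenvectorUnitary : Matrix n n ℂ) * (A * A)
        * (h.eigenvectorUnitary : Matrix n n ℂ) := by
    set U := (h.eigenvectorUnitary : Matrix n n ℂ)
    simp only [mul_assoc]
    rw [← mul_assoc U (star U) (A * U), hU, one_mul]
  rw [← key, e, diagonal_mul_diagonal]
  congr 1
  funext i
  simp [pow_two]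

lemma trace_sq_eq_sum_eig (h : A.IsHermitian) :
    (A * A).trace = ∑ i, (((h.eigenvalues i : ℝ) : ℂ))^2 := by
  have hU : (h.eigenvectorUnitary : Matrix n n ℂ) * star (h.eigenvectorUnitary : Matrix n n ℂ)
      = 1 := mem_unitaryGroup_iff.mp h.eigenvectorUnitary.2
  calc (A * A).trace = ((A * A) * ((h.eigenvectorUnitary : Matrix n n ℂ)
        * star (h.eigenvectorUnitary : Matrix n n ℂ))).trace := by rw [hU, mul_one]
    _ = (star (h.eigenvectorUnitary : Matrix n n ℂ) * (A * A)
        * (h.eigenvectorUnitary : Matrix n n ℂ)).trace := by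
        rw [← mul_assoc, trace_mul_comm, ← mul_assoc]
    _ = ∑ i, (((h.eigenvalues i : ℝ) : ℂ))^2 := by
        rw [conj_sq_eq_diag_sq h, trace_diagonal]

end Generic

lemma eig_mem (h : (D d * symProj d).IsHermitian) (i : Fin d × Fin d) :
    h.eigenvalues i = 0 ∨ h.eigenvalues i = -1 ∨ h.eigenvalues i = (d : ℝ) - 1 := by
  have hv := h.mulVec_eigenvectorBasis i
  set v : (Fin d × Fin d) → ℂ := ⇑(h.eigenvectorBasis i) with hvdef
  set μ : ℝ := h.eigenvalues i with hμ
  have hvne : ∃ p, v p ≠ 0 := by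
    by_contra hc
    push_neg at hc
    exact h.eigenvectorBasis.orthonormal.ne_zero i (by ext p; exact hc p)
  obtain ⟨p, hp⟩ := hvne
  have h2 : (D d * symProj d) *ᵥ ((D d * symProj d) *ᵥ v) = D d *ᵥ ((D d * symProj d) *ᵥ v) := by
    rw [mulVec_mulVec, mulVec_mulVec, MM_eq, mul_assoc]
  rw [hv, mulVec_smul, mulVec_smul, hv] at h2
  have h3 := congrFun h2 p
  simp only [Pi.smul_apply] at h3
  have h4 : (D d *ᵥ v) p = fC d p * v p := by
    rw [D, mulVec_diagonal]
  rw [h4] at h3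
  -- h3 : μ • (μ • v p) = μ • (fC d p * v p)
  have h5 : ((μ^2 : ℝ) : ℂ) * v p = ((μ * fR d p : ℝ) : ℂ) * v p := by
    rw [fC_eq_real] at h3
    simp only [Complex.real_smul] at h3
    push_cast
    linear_combination h3
  have h6 : (μ^2 : ℝ) = μ * fR d p :=
    Complex.ofReal_injective (mul_right_cancel₀ hp h5)
  have h7 : μ * (μ - fR d p) = 0 := by rw [mul_sub]; nlinarith [h6]
  rcases mul_eq_zero.mp h7 with h8 | h8
  · exact Or.inl h8
  · have h9 : μ = fR d p := by linarith
    simp only [fR] at h9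
    by_cases hd : p.1 = p.2
    · rw [if_pos hd] at h9; exact Or.inr (Or.inr h9)
    · rw [if_neg hd] at h9; exact Or.inr (Or.inl h9)

lemma main (hd : 1 ≤ d) :
    ∃ h : (D d * symProj d).IsHermitian,
      (Finset.univ.filter (fun i => h.eigenvalues i < 0)).card = d * (d - 1) / 2 := by
  refine ⟨M_herm, ?_⟩
  have hd1 : (1 : ℝ) ≤ (d : ℝ) := by exact_mod_cast hd
  have hmem := eig_mem (d := d) M_herm
  have hfilter : (Finset.univ.filter (fun i => (M_herm (d := d)).eigenvalues i < 0))
      = Finset.univ.filter (fun i => (M_herm (d := d)).eigenvalues i = -1) := by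
    ext i
    simp only [Finset.mem_filter, Finset.mem_univ, true_and]
    constructor
    · intro hlt
      rcases hmem i with h0 | h1 | h2
      · rw [h0] at hlt; linarith
      · exact h1
      · rw [h2] at hlt; linarith
    · intro he; rw [he]; norm_num
  have hsum1 : ∑ i, (M_herm (d := d)).eigenvalues i = ((d:ℝ) * d - d) / 2 := by
    have h0 := (trace_eq_sum_eig (M_herm (d := d))).symm.trans trace_M
    exact_mod_cast h0
  have hsum2 : ∑ i, ((M_herm (d := d)).eigenvalues i)^2
      = (d:ℝ) * ((d:ℝ) - 1)^2 + ((d:ℝ) * d - d) / 2 := by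
    have h0 := trace_sq_eq_sum_eig (M_herm (d := d))
    rw [MM_eq, trace_MM] at h0
    exact_mod_cast h0.symm
  have key : ∀ i, ((M_herm (d := d)).eigenvalues i)^2
        - ((d:ℝ) - 1) * (M_herm (d := d)).eigenvalues i
      = if (M_herm (d := d)).eigenvalues i = -1 then (d:ℝ) else 0 := by
    intro i
    rcases hmem i with h0 | h1 | h2
    · rw [h0, if_neg (by norm_num)]; ring
    · rw [h1, if_pos rfl]; ring
    · rw [h2, if_neg (by intro hc; linarith)]; ring
  have count : ∑ i, (((M_herm (d := d)).eigenvalues i)^2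
        - ((d:ℝ)-1) * (M_herm (d := d)).eigenvalues i)
      = (d:ℝ) * (((Finset.univ.filter
          (fun i => (M_herm (d := d)).eigenvalues i = -1)).card : ℝ)) := by
    rw [Finset.sum_congr rfl fun i _ => key i, ← Finset.sum_filter, Finset.sum_const,
      nsmul_eq_mul]
    ring
  have hcount2 : ∑ i, (((M_herm (d := d)).eigenvalues i)^2
        - ((d:ℝ)-1) * (M_herm (d := d)).eigenvalues i)
      = (d:ℝ) * ((d:ℝ) * ((d:ℝ)-1)/2) := by
    rw [Finset.sum_sub_distrib, hsum2, ← Finset.mul_sum, hsum1]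
    ring
  have hdpos : (0:ℝ) < d := by linarith
  have hA : (((Finset.univ.filter
        (fun i => (M_herm (d := d)).eigenvalues i = -1)).card : ℕ) : ℝ)
      = (d:ℝ) * ((d:ℝ)-1)/2 := mul_left_cancel₀ (ne_of_gt hdpos) (count.symm.trans hcount2)
  rw [hfilter]
  have heven : 2 ∣ d * (d - 1) := by
    obtain ⟨m, rfl⟩ : ∃ m, d = m + 1 := ⟨d - 1, (Nat.succ_pred_eq_of_pos hd).symm⟩
    have h0 := Nat.even_mul_succ_self m
    rw [mul_comm] at h0
    simpa [Nat.add_sub_cancel] using h0.two_dvd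
  have hcast : ((d * (d - 1) / 2 : ℕ) : ℝ) = (d:ℝ) * ((d:ℝ)-1)/2 := by
    rw [Nat.cast_div heven (by norm_num : ((2:ℕ):ℝ) ≠ 0)]
    rw [Nat.cast_mul, Nat.cast_sub hd]
    norm_num
  exact Nat.cast_injective (hA.trans hcast.symm)

end Stmt18

theorem stmt18 (d : ℕ) (hd : 1 ≤ d) :
    ∃ X : Matrix (Fin d × Fin d) (Fin d × Fin d) ℂ, X.PosSemidef ∧
      ∃ h : (symProj d * ptrans X * symProj d).IsHermitian,
        (Finset.univ.filter (fun i => h.eigenvalues i < 0)).card = d * (d - 1) / 2 := by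
  refine ⟨Stmt18.X d, Stmt18.X_psd, ?_⟩
  rw [Stmt18.M_eq]
  exact Stmt18.main hd
end
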